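/- arXiv:1805.00075 — 2 statements merged into one kernel-verified Lean document; each statement's English description precedes it below -/
import Mathlib

section
/- Let k ≥ 0 be an integer and let τ ∈ ℝ with τ ∉ Y_k (where Y_0 := ∅). Then there are infinitely many positive integers n such that 0 < (σ_n(τ) − τ)·n^{k+1} < c_k, and infinitely many positive integers n such that 0 < (τ − σ_n(τ))·n^{k+1} < c_k. -/
/-- Greedy partial sums: `gSigma τ n = σ_n(τ)`. -/
noncomputable def gSigma (τ : ℝ) : ℕ → ℝ
  | 0 => 0
  | n + 1 => gSigma τ n + (if gSigma τ n ≤ τ then (1 : ℝ) else -1) / (n + 1)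

/-- Greedy signs: for `n ≥ 1`, `gSign τ n = s_n(τ)`. -/
noncomputable def gSign (τ : ℝ) (n : ℕ) : ℝ :=
  if gSigma τ (n - 1) ≤ τ then 1 else -1

/-- Thue–Morse signs: `tmSign n = ε_n`. -/
noncomputable def tmSign (n : ℕ) : ℝ := (-1 : ℝ) ^ (Nat.digits 2 n).sum

/-- `fPer k` is the `2^k`-periodic function with `fPer k n = ε_n` for `0 ≤ n < 2^k`. -/
noncomputable def fPer (k n : ℕ) : ℝ := tmSign (n % 2 ^ k)

/-- The exceptional set `X_k`. -/
def Xset (k : ℕ) : Set ℝ :=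
  {τ | ∃ N m : ℕ, m < 2 ^ k ∧ ∀ n : ℕ, 1 ≤ n → N ≤ n → gSign τ n = fPer k (n + m)}

/-- `Y_k = ⋃_{1 ≤ h ≤ k} X_h` (so `Y_0 = ∅`). -/
def Yset (k : ℕ) : Set ℝ := ⋃ h ∈ Finset.Icc 1 k, Xset h

/-- `cConst k = c_k = 2^{k(k-1)/2} k!`. -/
noncomputable def cConst (k : ℕ) : ℝ := 2 ^ (k * (k - 1) / 2) * Nat.factorial k

namespace Aux13

open Finset

lemma tmSign_zero : tmSign 0 = 1 := by simp [tmSign]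

lemma tmSign_cases (n : ℕ) : tmSign n = 1 ∨ tmSign n = -1 := by
  unfold tmSign
  rcases Nat.even_or_odd ((Nat.digits 2 n).sum) with h | h
  · left; exact h.neg_one_pow
  · right; exact h.neg_one_pow

lemma tmSign_two_mul (i : ℕ) : tmSign (2 * i) = tmSign i := by
  rcases Nat.eq_zero_or_pos i with rfl | hi
  · simp
  · unfold tmSign
    rw [Nat.digits_def' (by norm_num : 1 < 2) (by omega)]
    have h1 : (2 * i) % 2 = 0 := by omega
    have h2 : (2 * i) / 2 = i := by omega
    rw [h1, h2]
    simp

lemma tmSign_two_mul_add_one (i : ℕ) : tmSign (2 * i + 1) = -tmSign i := by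
  unfold tmSign
  rw [Nat.digits_def' (by norm_num : 1 < 2) (by omega)]
  have h1 : (2 * i + 1) % 2 = 1 := by omega
  have h2 : (2 * i + 1) / 2 = i := by omega
  rw [h1, h2]
  simp [List.sum_cons, pow_add]

lemma tmSign_flip {k j : ℕ} (hj : j < 2 ^ k) : tmSign (j + 2 ^ k) = -tmSign j := by
  induction k generalizing j with
  | zero =>
    interval_cases j
    · simpa [tmSign_zero] using tmSign_two_mul_add_one 0
  | succ k ih =>
    rcases Nat.even_or_odd j with ⟨i, hi⟩ | ⟨i, hi⟩
    · subst hi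
      have hi2 : i < 2 ^ k := by have := hj; rw [pow_succ] at this; omega
      have he : i + i + 2 ^ (k + 1) = 2 * (i + 2 ^ k) := by rw [pow_succ]; ring
      have he2 : i + i = 2 * i := by ring
      rw [he, tmSign_two_mul, ih hi2, he2, tmSign_two_mul]
    · subst hi
      have hi2 : i < 2 ^ k := by have := hj; rw [pow_succ] at this; omega
      have he : 2 * i + 1 + 2 ^ (k + 1) = 2 * (i + 2 ^ k) + 1 := by rw [pow_succ]; ring
      rw [he, tmSign_two_mul_add_one, ih hi2, tmSign_two_mul_add_one]

lemma tmSign_mod_flip (k x : ℕ) :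
    tmSign ((x + 2 ^ k) % 2 ^ (k + 1)) = -tmSign (x % 2 ^ (k + 1)) := by
  have hx : x % 2 ^ (k + 1) < 2 ^ (k + 1) := Nat.mod_lt _ (by positivity)
  have hmod : (x + 2 ^ k) % 2 ^ (k + 1) = (x % 2 ^ (k + 1) + 2 ^ k) % 2 ^ (k + 1) :=
    ((Nat.mod_modEq x (2 ^ (k + 1))).symm.add_right (2 ^ k))
  rw [hmod]
  set r := x % 2 ^ (k + 1) with hr
  rcases lt_or_ge r (2 ^ k) with h | h
  · rw [Nat.mod_eq_of_lt (by rw [pow_succ]; omega), tmSign_flip h]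
  · have hrk : r - 2 ^ k < 2 ^ k := by rw [pow_succ] at hx; omega
    have h1 : r + 2 ^ k = (r - 2 ^ k) + 2 ^ (k + 1) := by rw [pow_succ]; omega
    have h3 : r = (r - 2 ^ k) + 2 ^ k := by omega
    rw [h1, Nat.add_mod_right, Nat.mod_eq_of_lt (by rw [pow_succ]; omega)]
    conv_rhs => rw [h3, tmSign_flip hrk]
    ring

/-! ### The beta sequence -/

/-- `bet r q = r! / (q (q+1) ⋯ (q+r))`. -/
noncomputable def bet (r q : ℕ) : ℝ :=
  (Nat.factorial r : ℝ) / ∏ i ∈ range (r + 1), ((q : ℝ) + i)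

lemma prod_shift_pos {r q : ℕ} (hq : 1 ≤ q) : 0 < ∏ i ∈ range r, ((q : ℝ) + i) := by
  apply Finset.prod_pos
  intro i _
  have : (1 : ℝ) ≤ (q : ℝ) := by exact_mod_cast hq
  positivity

lemma bet_pos {r q : ℕ} (hq : 1 ≤ q) : 0 < bet r q := by
  unfold bet
  exact div_pos (by positivity) (prod_shift_pos hq)

lemma bet_cast_succ (r q : ℕ) :
    bet r (q + 1) = (Nat.factorial r : ℝ) / ∏ i ∈ range (r + 1), ((q : ℝ) + 1 + i) := by
  unfold bet
  congr 1
  exact Finset.prod_congr rfl fun i _ => by push_cast; ring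

lemma bet_rec {r q : ℕ} (hq : 1 ≤ q) : bet r q - bet r (q + 1) = bet (r + 1) q := by
  have hq' : (1 : ℝ) ≤ (q : ℝ) := by exact_mod_cast hq
  set P1 : ℝ := ∏ i ∈ range (r + 1), ((q : ℝ) + i) with hP1
  set P2 : ℝ := ∏ i ∈ range (r + 1), ((q : ℝ) + 1 + i) with hP2
  set P3 : ℝ := ∏ i ∈ range (r + 2), ((q : ℝ) + i) with hP3
  have hP1pos : 0 < P1 := prod_shift_pos hq
  have hP3pos : 0 < P3 := prod_shift_pos hq
  have hP2pos : 0 < P2 := by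
    rw [hP2]; apply Finset.prod_pos; intro i _; positivity
  have e1 : P3 = P1 * ((q : ℝ) + r + 1) := by
    rw [hP3, prod_range_succ, ← hP1]; push_cast; ring
  have e2 : P3 = (q : ℝ) * P2 := by
    rw [hP3, prod_range_succ', ← mul_comm]
    congr 1
    · norm_num
    · rw [hP2]
      exact Finset.prod_congr rfl fun i _ => by push_cast; ring
  have b1 : bet r q = (Nat.factorial r : ℝ) * ((q : ℝ) + r + 1) / P3 := by
    rw [e1, mul_div_mul_right _ _ (by positivity : ((q : ℝ) + r + 1) ≠ 0)]
    rfl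
  have b2 : bet r (q + 1) = (Nat.factorial r : ℝ) * (q : ℝ) / P3 := by
    rw [bet_cast_succ, ← hP2, e2]
    rw [mul_comm ((Nat.factorial r : ℝ)) ((q : ℝ)), mul_div_mul_left _ _ (by positivity : (q : ℝ) ≠ 0)]
  rw [b1, b2, div_sub_div_same]
  unfold bet
  rw [← hP3]
  congr 1
  rw [Nat.factorial_succ]
  push_cast
  ring

lemma bet_mono_succ {r q : ℕ} (hq : 1 ≤ q) : bet r (q + 1) ≤ bet r q := by
  have := bet_rec (r := r) hq
  have := bet_pos (r := r + 1) hq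
  linarith

lemma bet_mono {r q q' : ℕ} (hq : 1 ≤ q) (h : q ≤ q') : bet r q' ≤ bet r q := by
  induction q' with
  | zero => omega
  | succ n ih =>
    rcases Nat.lt_or_ge n q with h' | h'
    · have : q = n + 1 := by omega
      subst this; rfl
    · exact le_trans (bet_mono_succ (by omega)) (ih h')

lemma bet_le {r q : ℕ} (hq : 1 ≤ q) : bet r q ≤ (Nat.factorial r : ℝ) / (q : ℝ) ^ (r + 1) := by
  have hq' : (1 : ℝ) ≤ (q : ℝ) := by exact_mod_cast hq
  unfold bet
  apply div_le_div_of_nonneg_left (by positivity) (by positivity)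
  calc ((q : ℝ)) ^ (r + 1) = ∏ _i ∈ range (r + 1), (q : ℝ) := by
        rw [Finset.prod_const, card_range]
    _ ≤ ∏ i ∈ range (r + 1), ((q : ℝ) + i) :=
        Finset.prod_le_prod (fun i _ => by positivity) (fun i _ => by
          have : (0 : ℝ) ≤ i := Nat.cast_nonneg i
          linarith)

lemma bet_ge {r q : ℕ} (hq : 1 ≤ q) :
    (Nat.factorial r : ℝ) / ((q : ℝ) + r) ^ (r + 1) ≤ bet r q := by
  have hq' : (1 : ℝ) ≤ (q : ℝ) := by exact_mod_cast hq
  unfold bet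
  apply div_le_div_of_nonneg_left (by positivity) (prod_shift_pos hq)
  calc ∏ i ∈ range (r + 1), ((q : ℝ) + i)
      ≤ ∏ _i ∈ range (r + 1), ((q : ℝ) + r) :=
        Finset.prod_le_prod (fun i _ => by positivity) (fun i hi => by
          have : (i : ℝ) ≤ (r : ℝ) := by
            exact_mod_cast Nat.le_of_lt_succ (mem_range.mp hi)
          linarith)
    _ = ((q : ℝ) + r) ^ (r + 1) := by rw [Finset.prod_const, card_range]


/-! ### The H machinery: Thue-Morse signed sums of iterated differences -/

/-- `HH m r q = ∑_{j<2^m} ε_j βᵣ(q+j)`. -/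
noncomputable def HH (m r q : ℕ) : ℝ := ∑ j ∈ range (2 ^ m), tmSign j * bet r (q + j)

lemma HH_zero (r q : ℕ) : HH 0 r q = bet r q := by
  simp [HH, tmSign_zero]

lemma HH_r {m r q : ℕ} (hq : 1 ≤ q) : HH m (r + 1) q = HH m r q - HH m r (q + 1) := by
  unfold HH
  rw [← Finset.sum_sub_distrib]
  apply Finset.sum_congr rfl
  intro j _
  rw [← mul_sub, show q + 1 + j = q + j + 1 by ring, bet_rec (by omega : 1 ≤ q + j)]

lemma HH_m (m r q : ℕ) : HH (m + 1) r q = HH m r q - HH m r (q + 2 ^ m) := by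
  unfold HH
  have h2 : 2 ^ (m + 1) = 2 ^ m + 2 ^ m := by rw [pow_succ]; ring
  rw [h2, Finset.sum_range_add]
  have : ∀ j ∈ range (2 ^ m), tmSign (2 ^ m + j) * bet r (q + (2 ^ m + j))
      = -(tmSign j * bet r (q + 2 ^ m + j)) := by
    intro j hj
    have hj' : j < 2 ^ m := mem_range.mp hj
    have : (2 : ℕ) ^ m + j = j + 2 ^ m := by ring
    rw [this, tmSign_flip hj']
    have : q + (j + 2 ^ m) = q + 2 ^ m + j := by ring
    rw [this]
    ring
  rw [Finset.sum_congr rfl this, Finset.sum_neg_distrib]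
  ring

lemma HH_telescope {m r q : ℕ} (hq : 1 ≤ q) (s : ℕ) :
    HH m r q - HH m r (q + s) = ∑ u ∈ range s, HH m (r + 1) (q + u) := by
  induction s with
  | zero => simp
  | succ n ih =>
    rw [Finset.sum_range_succ, ← ih, HH_r (by omega : 1 ≤ q + n)]
    have : q + (n + 1) = q + n + 1 := by ring
    rw [this]
    ring

lemma HH_ub {m : ℕ} : ∀ r q : ℕ, 1 ≤ q →
    HH m r q ≤ 2 ^ (m * (m - 1) / 2) * bet (m + r) q := by
  induction m with
  | zero => intro r q hq; rw [HH_zero]; simp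
  | succ m ih =>
    intro r q hq
    have e1 : HH (m + 1) r q = ∑ u ∈ range (2 ^ m), HH m (r + 1) (q + u) := by
      rw [HH_m, HH_telescope hq]
    rw [e1]
    have hexp : (m + 1) * (m + 1 - 1) / 2 = m * (m - 1) / 2 + m := by
      rcases m with _ | s
      · simp
      · have e : s + 1 + 1 - 1 = s + 1 := by omega
        have e' : s + 1 - 1 = s := by omega
        rw [e, e']
        have h1 : (s + 1 + 1) * (s + 1) = (s + 1) * s + (s + 1) * 2 := by ring
        rw [h1, Nat.add_mul_div_right _ _ (by norm_num : 0 < 2)]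
    calc ∑ u ∈ range (2 ^ m), HH m (r + 1) (q + u)
        ≤ ∑ u ∈ range (2 ^ m), 2 ^ (m * (m - 1) / 2) * bet (m + (r + 1)) (q + u) :=
          Finset.sum_le_sum (fun u _ => ih (r + 1) (q + u) (by omega))
      _ ≤ ∑ _u ∈ range (2 ^ m), 2 ^ (m * (m - 1) / 2) * bet (m + (r + 1)) q := by
          apply Finset.sum_le_sum
          intro u _
          have := bet_mono (r := m + (r + 1)) hq (Nat.le_add_right q u)
          have h2 : (0:ℝ) < 2 ^ (m * (m - 1) / 2) := by positivity
          nlinarith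
      _ = 2 ^ (2 ^ m) * 0 + 2 ^ m * (2 ^ (m * (m - 1) / 2) * bet (m + (r + 1)) q) := by
          rw [Finset.sum_const, card_range]; push_cast; ring
      _ = 2 ^ ((m + 1) * (m + 1 - 1) / 2) * bet (m + 1 + r) q := by
          rw [hexp, pow_add]
          have : m + (r + 1) = m + 1 + r := by ring
          rw [this]
          push_cast
          ring

lemma HH_lb {m : ℕ} : ∀ r q : ℕ, 1 ≤ q →
    2 ^ (m * (m - 1) / 2) * bet (m + r) (q + 2 ^ m) ≤ HH m r q := by
  induction m with
  | zero =>
    intro r q hq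
    rw [HH_zero]
    simpa using bet_mono (r := r) hq (by omega : q ≤ q + 2 ^ 0)
  | succ m ih =>
    intro r q hq
    have e1 : HH (m + 1) r q = ∑ u ∈ range (2 ^ m), HH m (r + 1) (q + u) := by
      rw [HH_m, HH_telescope hq]
    rw [e1]
    have hexp : (m + 1) * (m + 1 - 1) / 2 = m * (m - 1) / 2 + m := by
      rcases m with _ | s
      · simp
      · have e : s + 1 + 1 - 1 = s + 1 := by omega
        have e' : s + 1 - 1 = s := by omega
        rw [e, e']
        have h1 : (s + 1 + 1) * (s + 1) = (s + 1) * s + (s + 1) * 2 := by ring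
        rw [h1, Nat.add_mul_div_right _ _ (by norm_num : 0 < 2)]
    calc 2 ^ ((m + 1) * (m + 1 - 1) / 2) * bet (m + 1 + r) (q + 2 ^ (m + 1))
        = ∑ _u ∈ range (2 ^ m), 2 ^ (m * (m - 1) / 2) * bet (m + (r + 1)) (q + 2 ^ (m + 1)) := by
          rw [Finset.sum_const, card_range, hexp, pow_add]
          have : m + (r + 1) = m + 1 + r := by ring
          rw [this]
          push_cast
          ring
      _ ≤ ∑ u ∈ range (2 ^ m), 2 ^ (m * (m - 1) / 2) * bet (m + (r + 1)) (q + u + 2 ^ m) := by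
          apply Finset.sum_le_sum
          intro u hu
          have hu' : u < 2 ^ m := mem_range.mp hu
          have hle : q + u + 2 ^ m ≤ q + 2 ^ (m + 1) := by
            rw [pow_succ]; omega
          have := bet_mono (r := m + (r + 1)) (by omega : 1 ≤ q + u + 2 ^ m) hle
          have h2 : (0:ℝ) < 2 ^ (m * (m - 1) / 2) := by positivity
          nlinarith
      _ ≤ ∑ u ∈ range (2 ^ m), HH m (r + 1) (q + u) :=
          Finset.sum_le_sum (fun u _ => ih (r + 1) (q + u) (by omega))


/-! ### The sequences Q and a -/

/-- `Qp p j = ∑_{i<j} ε_i/(p+i)`. -/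
noncomputable def Qp (p j : ℕ) : ℝ := ∑ i ∈ range j, tmSign i / ((p : ℝ) + i)

/-- `av m p = a_m(p) = ∑_{j<2^m} ε_j/(p+j)`. -/
noncomputable def av (m p : ℕ) : ℝ := Qp p (2 ^ m)

lemma Qp_succ (p j : ℕ) : Qp p (j + 1) = Qp p j + tmSign j / ((p : ℝ) + j) :=
  Finset.sum_range_succ _ j

lemma Qp_zero (p : ℕ) : Qp p 0 = 0 := rfl

lemma bet_zero (q : ℕ) : bet 0 q = 1 / (q : ℝ) := by
  unfold bet
  rw [prod_range_one]
  norm_num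

lemma av_eq_HH (m p : ℕ) : av m p = HH m 0 p := by
  unfold av Qp HH
  apply Finset.sum_congr rfl
  intro j _
  rw [bet_zero]
  push_cast
  ring

lemma Qp_split {p k r : ℕ} (hr : r ≤ 2 ^ k) :
    Qp p (2 ^ k + r) = av k p - Qp (p + 2 ^ k) r := by
  have hav : av k p = ∑ i ∈ range (2 ^ k), tmSign i / ((p : ℝ) + i) := rfl
  unfold Qp
  rw [hav, Finset.sum_range_add, sub_eq_add_neg]
  congr 1
  rw [← Finset.sum_neg_distrib]
  apply Finset.sum_congr rfl
  intro i hi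
  have hi' : i < 2 ^ k := lt_of_lt_of_le (mem_range.mp hi) hr
  rw [show (2:ℕ) ^ k + i = i + 2 ^ k by ring, tmSign_flip hi']
  push_cast
  ring

lemma av_rec (m p : ℕ) : av (m + 1) p = av m p - av m (p + 2 ^ m) := by
  unfold av
  rw [show (2:ℕ) ^ (m + 1) = 2 ^ m + 2 ^ m by rw [pow_succ]; ring, Qp_split le_rfl]
  rfl

lemma cConst_pos (m : ℕ) : 0 < cConst m := by
  unfold cConst
  positivity

lemma av_ub {m p : ℕ} (hp : 1 ≤ p) : av m p ≤ cConst m / (p : ℝ) ^ (m + 1) := by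
  rw [av_eq_HH]
  calc HH m 0 p ≤ 2 ^ (m * (m - 1) / 2) * bet (m + 0) p := HH_ub 0 p hp
    _ ≤ 2 ^ (m * (m - 1) / 2) * ((Nat.factorial m : ℝ) / (p : ℝ) ^ (m + 1)) := by
        have := bet_le (r := m) (q := p) hp
        rw [Nat.add_zero] at *
        have h2 : (0:ℝ) < 2 ^ (m * (m - 1) / 2) := by positivity
        nlinarith
    _ = cConst m / (p : ℝ) ^ (m + 1) := by
        unfold cConst; ring

lemma av_lb {m p : ℕ} (hp : 1 ≤ p) :
    cConst m / ((p : ℝ) + 2 ^ (m + 1)) ^ (m + 1) ≤ av m p := by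
  rw [av_eq_HH]
  have h1 := HH_lb (m := m) 0 p hp
  rw [Nat.add_zero] at h1
  refine le_trans ?_ h1
  have h2 := bet_ge (r := m) (q := p + 2 ^ m) (le_trans Nat.one_le_two_pow (Nat.le_add_left _ _))
  have h3 : ((p + 2 ^ m : ℕ) : ℝ) + m ≤ (p : ℝ) + 2 ^ (m + 1) := by
    push_cast
    have hm : (m : ℝ) ≤ 2 ^ m := by
      exact_mod_cast Nat.le_of_lt (Nat.lt_two_pow_self (n := m))
    have : (2:ℝ) ^ (m+1) = 2 ^ m + 2 ^ m := by rw [pow_succ]; ring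
    linarith
  have h4 : (Nat.factorial m : ℝ) / ((p : ℝ) + 2 ^ (m + 1)) ^ (m + 1)
      ≤ (Nat.factorial m : ℝ) / (((p + 2 ^ m : ℕ) : ℝ) + m) ^ (m + 1) := by
    apply div_le_div_of_nonneg_left (by positivity) (by positivity)
    apply pow_le_pow_left₀ (by positivity) h3
  have h5 : (0:ℝ) < 2 ^ (m * (m - 1) / 2) := by positivity
  calc cConst m / ((p : ℝ) + 2 ^ (m + 1)) ^ (m + 1)
      = 2 ^ (m * (m - 1) / 2) * ((Nat.factorial m : ℝ) / ((p : ℝ) + 2 ^ (m + 1)) ^ (m + 1)) := by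
        unfold cConst; ring
    _ ≤ 2 ^ (m * (m - 1) / 2) * ((Nat.factorial m : ℝ) / (((p + 2 ^ m : ℕ) : ℝ) + m) ^ (m + 1)) := by
        nlinarith
    _ ≤ 2 ^ (m * (m - 1) / 2) * bet m (p + 2 ^ m) := by nlinarith

lemma av_pos {m p : ℕ} (hp : 1 ≤ p) : 0 < av m p := by
  have h1 := av_lb (m := m) hp
  have h2 : (0:ℝ) < cConst m / ((p : ℝ) + 2 ^ (m + 1)) ^ (m + 1) := by
    have := cConst_pos m
    have hp' : (1:ℝ) ≤ (p:ℝ) := by exact_mod_cast hp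
    positivity
  linarith

lemma av_mono_succ {m p : ℕ} (hp : 1 ≤ p) : av m (p + 1) ≤ av m p := by
  have h1 : av m p - av m (p + 1) = HH m 1 p := by
    rw [av_eq_HH, av_eq_HH, HH_r hp]
  have h2 := HH_lb (m := m) 1 p hp
  have h3 : 0 < bet (m + 1) (p + 2 ^ m) := bet_pos (le_trans Nat.one_le_two_pow (Nat.le_add_left _ _))
  have h4 : (0:ℝ) < 2 ^ (m * (m - 1) / 2) := by positivity
  nlinarith

lemma av_mono {m p p' : ℕ} (hp : 1 ≤ p) (h : p ≤ p') : av m p' ≤ av m p := by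
  induction p' with
  | zero => omega
  | succ n ih =>
    rcases Nat.lt_or_ge n p with h' | h'
    · have : p = n + 1 := by omega
      subst this; rfl
    · exact le_trans (av_mono_succ (by omega)) (ih h')

lemma av_level_le {m p : ℕ} (hp : 1 ≤ p) : av (m + 1) p ≤ av m p := by
  rw [av_rec]
  have := av_pos (m := m) (p := p + 2 ^ m) (le_trans Nat.one_le_two_pow (Nat.le_add_left _ _))
  linarith


/-! ### Numeric comparison lemmas -/

lemma one_add_pow_le {y : ℝ} (n : ℕ) (hy : 0 ≤ y) (h : 2 * n * y ≤ 1) :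
    (1 + y) ^ n ≤ 1 + 2 * n * y := by
  induction n with
  | zero => norm_num
  | succ n ih =>
    have hn : 2 * (n : ℝ) * y ≤ 1 := by
      have : (n : ℝ) ≤ (n : ℝ) + 1 := by linarith
      push_cast at h
      nlinarith
    have ih' := ih hn
    have h1 : (1 + y) ^ (n + 1) = (1 + y) ^ n * (1 + y) := by ring
    have h2 : (0:ℝ) ≤ (1 + y) ^ n := by positivity
    push_cast
    calc (1 + y) ^ n * (1 + y) ≤ (1 + 2 * n * y) * (1 + y) := by nlinarith
      _ ≤ 1 + 2 * ((n : ℝ) + 1) * y := by nlinarith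

lemma add_pow_le_two_mul {x A : ℝ} (n : ℕ) (hx : 0 < x) (hA : 0 ≤ A)
    (h : 2 * n * A ≤ x) : (x + A) ^ n ≤ 2 * x ^ n := by
  have hAx : 2 * n * (A / x) ≤ 1 := by
    calc 2 * (n : ℝ) * (A / x) = (2 * n * A) / x := by ring
      _ ≤ 1 := by rw [div_le_one hx]; exact h
  have h0 : 0 ≤ A / x := by positivity
  have h1 : (x + A) ^ n = x ^ n * (1 + A / x) ^ n := by
    rw [← mul_pow]
    congr 1
    field_simp
  rw [h1]
  have h2 := one_add_pow_le n h0 hAx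
  have h3 : (0:ℝ) < x ^ n := by positivity
  nlinarith

/-- The threshold sequence. -/
def Thr (m : ℕ) : ℕ := (m + 5) * 2 ^ (m + 10)

lemma Thr_mono {m m' : ℕ} (h : m ≤ m') : Thr m ≤ Thr m' := by
  unfold Thr
  exact Nat.mul_le_mul (by omega) (Nat.pow_le_pow_right (by norm_num) (by omega))

lemma Thr_one_le (m : ℕ) : 1 ≤ Thr m :=
  Nat.one_le_iff_ne_zero.mpr (Nat.mul_ne_zero (by omega) (Nat.pos_iff_ne_zero.mp (Nat.two_pow_pos _)))

lemma cConst_succ (m : ℕ) : cConst (m + 1) = 2 ^ m * ((m : ℝ) + 1) * cConst m := by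
  unfold cConst
  have hexp : (m + 1) * (m + 1 - 1) / 2 = m * (m - 1) / 2 + m := by
    rcases m with _ | s
    · simp
    · have e : s + 1 + 1 - 1 = s + 1 := by omega
      have e' : s + 1 - 1 = s := by omega
      rw [e, e']
      have h1 : (s + 1 + 1) * (s + 1) = (s + 1) * s + (s + 1) * 2 := by ring
      rw [h1, Nat.add_mul_div_right _ _ (by norm_num : 0 < 2)]
  rw [hexp, pow_add, Nat.factorial_succ]
  push_cast
  ring

lemma aux_mul_pow_le (m a : ℕ) (h : a + 1 ≤ 10) :
    2 * ((m : ℝ) + 1) * 2 ^ (m + a) ≤ ((m : ℝ) + 5) * 2 ^ (m + 10) := by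
  have hm : (0:ℝ) ≤ (m : ℝ) := Nat.cast_nonneg m
  have e1 : 2 * ((m : ℝ) + 1) * 2 ^ (m + a) = ((m : ℝ) + 1) * 2 ^ (m + a + 1) := by
    rw [pow_succ]; ring
  rw [e1]
  exact mul_le_mul (by linarith) (pow_le_pow_right₀ (by norm_num) (by omega))
    (by positivity) (by linarith)

/-- Main crude comparison: one level up is much smaller. -/
lemma av_cmp {m p q : ℕ} (hq : 1 ≤ q) (hp : Thr m ≤ p) (hpq : q ≤ p + 2 ^ (m + 2)) :
    av (m + 1) p < av m q := by
  have hp1 : 1 ≤ p := le_trans (Thr_one_le m) hp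
  have hpR : (Thr m : ℝ) ≤ (p : ℝ) := by exact_mod_cast hp
  have hThrR : ((m : ℝ) + 5) * 2 ^ (m + 10) = (Thr m : ℝ) := by unfold Thr; push_cast; ring
  have hpbig : ((m : ℝ) + 5) * 2 ^ (m + 10) ≤ (p : ℝ) := by rw [hThrR]; exact hpR
  have hppos : (0:ℝ) < (p : ℝ) := by exact_mod_cast hp1
  -- upper bound for av (m+1) p
  have h1 : av (m + 1) p ≤ cConst (m + 1) / (p : ℝ) ^ (m + 2) := av_ub hp1
  -- lower bound for av m q
  have h2 : cConst m / ((q : ℝ) + 2 ^ (m + 1)) ^ (m + 1) ≤ av m q := av_lb hq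
  -- (q + 2^(m+1)) ≤ p + 2^(m+3)
  have h3 : (q : ℝ) + 2 ^ (m + 1) ≤ (p : ℝ) + 2 ^ (m + 3) := by
    have : (q : ℝ) ≤ (p : ℝ) + 2 ^ (m + 2) := by exact_mod_cast hpq
    have h4 : (2:ℝ) ^ (m + 2) + 2 ^ (m + 1) ≤ 2 ^ (m + 3) := by
      have e1 : (2:ℝ) ^ (m + 2) = 2 ^ (m + 1) * 2 := by rw [pow_succ]
      have e2 : (2:ℝ) ^ (m + 3) = 2 ^ (m + 1) * 4 := by
        rw [show m + 3 = (m + 1) + 2 by ring, pow_add]; norm_num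
      nlinarith [pow_pos (by norm_num : (0:ℝ) < 2) (m + 1)]
    linarith
  have h5 : ((p : ℝ) + 2 ^ (m + 3)) ^ (m + 1) ≤ 2 * (p : ℝ) ^ (m + 1) := by
    apply add_pow_le_two_mul (m + 1) hppos (by positivity)
    have h6 := aux_mul_pow_le m 3 (by omega)
    push_cast
    linarith
  have h7 : ((q : ℝ) + 2 ^ (m + 1)) ^ (m + 1) ≤ 2 * (p : ℝ) ^ (m + 1) := by
    refine le_trans (pow_le_pow_left₀ (by positivity) h3 (m + 1)) h5
  -- so av m q ≥ cConst m / (2 p^(m+1))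
  have h8 : cConst m / (2 * (p : ℝ) ^ (m + 1)) ≤ av m q := by
    refine le_trans ?_ h2
    apply div_le_div_of_nonneg_left (le_of_lt (cConst_pos m)) (by positivity)
    exact h7
  -- and cConst (m+1) / p^(m+2) < cConst m / (2 p^(m+1)) iff 2^(m+1) (m+1) * 2 < p
  have h9 : cConst (m + 1) / (p : ℝ) ^ (m + 2) < cConst m / (2 * (p : ℝ) ^ (m + 1)) := by
    rw [cConst_succ, div_lt_div_iff₀ (by positivity) (by positivity)]
    have hc := cConst_pos m
    have e1 : 2 ^ m * ((m : ℝ) + 1) * cConst m * (2 * (p : ℝ) ^ (m + 1))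
        = cConst m * ((p : ℝ) ^ (m + 1) * (2 ^ (m + 1) * ((m : ℝ) + 1))) := by
      rw [pow_succ]
      ring
    have e2 : cConst m * (p : ℝ) ^ (m + 2) = cConst m * ((p : ℝ) ^ (m + 1) * (p : ℝ)) := by
      rw [show m + 2 = (m + 1) + 1 by ring, pow_succ]
    rw [e1, e2]
    have hP : (0:ℝ) < (p : ℝ) ^ (m + 1) := by positivity
    have hlt : (2:ℝ) ^ (m + 1) * ((m : ℝ) + 1) < (p : ℝ) := by
      have hm : (0:ℝ) ≤ (m : ℝ) := Nat.cast_nonneg m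
      have e3 : (2:ℝ) ^ (m + 1) * ((m : ℝ) + 1) ≤ 2 ^ (m + 10) * ((m : ℝ) + 1) :=
        mul_le_mul_of_nonneg_right (pow_le_pow_right₀ (by norm_num) (by omega)) (by linarith)
      have e4 : (2:ℝ) ^ (m + 10) * ((m : ℝ) + 1) < ((m : ℝ) + 5) * 2 ^ (m + 10) := by
        calc (2:ℝ) ^ (m + 10) * ((m : ℝ) + 1) = ((m : ℝ) + 1) * 2 ^ (m + 10) := by ring
          _ < ((m : ℝ) + 5) * 2 ^ (m + 10) :=
            mul_lt_mul_of_pos_right (by linarith) (by positivity)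
      linarith
    exact mul_lt_mul_of_pos_left (mul_lt_mul_of_pos_left hlt hP) hc
  calc av (m + 1) p ≤ cConst (m + 1) / (p : ℝ) ^ (m + 2) := h1
    _ < cConst m / (2 * (p : ℝ) ^ (m + 1)) := h9
    _ ≤ av m q := h8

/-- Flatness: `a_m(p) ≤ 2 a_m(p + 2^(m+1))` for `p` large. -/
lemma av_flat {m p : ℕ} (hp : Thr m ≤ p) : av m p ≤ 2 * av m (p + 2 ^ (m + 1)) := by
  have hp1 : 1 ≤ p := le_trans (Thr_one_le m) hp
  have hppos : (0:ℝ) < (p : ℝ) := by exact_mod_cast hp1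
  have h1 : av m p ≤ cConst m / (p : ℝ) ^ (m + 1) := av_ub hp1
  have h2 : cConst m / (((p + 2 ^ (m + 1) : ℕ) : ℝ) + 2 ^ (m + 1)) ^ (m + 1)
      ≤ av m (p + 2 ^ (m + 1)) := av_lb (le_trans Nat.one_le_two_pow (Nat.le_add_left _ _))
  have h3 : ((p + 2 ^ (m + 1) : ℕ) : ℝ) + 2 ^ (m + 1) = (p : ℝ) + 2 ^ (m + 2) := by
    push_cast
    rw [show m + 2 = (m + 1) + 1 by ring, pow_succ]
    ring
  rw [h3] at h2
  have h5 : ((p : ℝ) + 2 ^ (m + 2)) ^ (m + 1) ≤ 2 * (p : ℝ) ^ (m + 1) := by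
    apply add_pow_le_two_mul (m + 1) hppos (by positivity)
    have hpR : ((m : ℝ) + 5) * 2 ^ (m + 10) ≤ (p : ℝ) := by
      have : (Thr m : ℝ) ≤ (p : ℝ) := by exact_mod_cast hp
      unfold Thr at this
      push_cast at this
      linarith
    have h6 := aux_mul_pow_le m 2 (by omega)
    push_cast
    linarith
  -- cConst m / p^(m+1) ≤ 2 * (cConst m / (2 p^(m+1))) ≤ 2 av
  have h8 : cConst m / ((p : ℝ) + 2 ^ (m + 2)) ^ (m + 1) ≥ cConst m / (2 * (p : ℝ) ^ (m + 1)) := by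
    apply div_le_div_of_nonneg_left (le_of_lt (cConst_pos m)) (by positivity) h5
  have h9 : cConst m / (p : ℝ) ^ (m + 1) = 2 * (cConst m / (2 * (p : ℝ) ^ (m + 1))) := by
    field_simp
  calc av m p ≤ cConst m / (p : ℝ) ^ (m + 1) := h1
    _ = 2 * (cConst m / (2 * (p : ℝ) ^ (m + 1))) := h9
    _ ≤ 2 * (cConst m / ((p : ℝ) + 2 ^ (m + 2)) ^ (m + 1)) := by linarith
    _ ≤ 2 * av m (p + 2 ^ (m + 1)) := by linarith

/-- Step comparison used in the prefix-sum lemma: `a_{m+1}(p) ≤ a_m(p + 2^(m+1))`. -/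
lemma av_step_ge {m p : ℕ} (hp : Thr m ≤ p) : av (m + 1) p ≤ av m (p + 2 ^ (m + 1)) := by
  have hp1 : 1 ≤ p := le_trans (Thr_one_le m) hp
  have h1 : av m (p + 2 ^ m) ≥ av m (p + 2 ^ (m + 1)) := by
    apply av_mono (le_trans Nat.one_le_two_pow (Nat.le_add_left _ _))
    exact Nat.add_le_add_left (Nat.pow_le_pow_right (by norm_num) (by omega)) p
  have h2 := av_flat hp
  rw [av_rec]
  linarith


/-! ### Structure of Thue-Morse prefix sums -/

lemma Ppm : ∀ k p, Thr k ≤ p → ∀ j, j < 2 ^ k →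
    (tmSign j = 1 → Qp p j ≤ 0) ∧ (tmSign j = -1 → av (k - 1) p ≤ Qp p j) := by
  intro k
  induction k with
  | zero =>
    intro p hp j hj
    interval_cases j
    constructor
    · intro _; rw [Qp_zero]
    · rw [tmSign_zero]; norm_num
  | succ k ih =>
    intro p hp j hj
    have hpk : Thr k ≤ p := le_trans (Thr_mono (by omega)) hp
    have hp1 : 1 ≤ p := le_trans (Thr_one_le _) hpk
    rcases Nat.lt_or_ge j (2 ^ k) with hjk | hjk
    · constructor
      · exact (ih p hpk j hjk).1
      · intro hs
        rcases k with _ | s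
        · interval_cases j
          rw [tmSign_zero] at hs; norm_num at hs
        · have h1 := (ih p hpk j hjk).2 hs
          have h2 : av (s + 1) p ≤ av (s + 1 - 1) p := by
            have : av (s + 1) p ≤ av s p := av_level_le hp1
            simpa using this
          have h3 : av (s + 1 + 1 - 1) p = av (s + 1) p := rfl
          rw [h3]
          exact le_trans h2 h1
    · -- j = 2^k + r
      set r := j - 2 ^ k with hr
      have hjr : j = 2 ^ k + r := by omega
      have hrk : r < 2 ^ k := by
        have h2 : (2:ℕ) ^ (k + 1) = 2 ^ k + 2 ^ k := by rw [pow_succ]; ring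
        omega
      have hflip : tmSign j = -tmSign r := by
        rw [hjr, show (2:ℕ) ^ k + r = r + 2 ^ k by ring]
        exact tmSign_flip hrk
      have hsplit : Qp p j = av k p - Qp (p + 2 ^ k) r := by
        rw [hjr]; exact Qp_split (le_of_lt hrk)
      have hp'k : Thr k ≤ p + 2 ^ k := le_trans hpk (Nat.le_add_right _ _)
      constructor
      · intro hs
        have hsr : tmSign r = -1 := by
          rcases tmSign_cases r with h | h
          · rw [h] at hflip; rw [hflip] at hs; norm_num at hs
          · exact h
        have hr1 : 1 ≤ r := by
          by_contra hr0
          have : r = 0 := by omega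
          rw [this, tmSign_zero] at hsr; norm_num at hsr
        have hk1 : 1 ≤ k := by
          by_contra hk0
          have : k = 0 := by omega
          subst this
          omega
        obtain ⟨s, rfl⟩ : ∃ s, k = s + 1 := ⟨k - 1, by omega⟩
        have h1 := (ih (p + 2 ^ (s + 1)) hp'k r hrk).2 hsr
        have h2 : av (s + 1) p ≤ av (s + 1 - 1) (p + 2 ^ (s + 1)) := by
          have := av_step_ge (m := s) (p := p) (le_trans (Thr_mono (by omega)) hp)
          simpa using this
        rw [hsplit]
        have := le_trans h2 h1
        linarith
      · intro hs
        have hsr : tmSign r = 1 := by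
          rcases tmSign_cases r with h | h
          · exact h
          · rw [h] at hflip; rw [hflip] at hs; norm_num at hs
        have h1 := (ih (p + 2 ^ k) hp'k r hrk).1 hsr
        rw [hsplit]
        have h3 : av (k + 1 - 1) p = av k p := rfl
        rw [h3]
        linarith

/-! ### Dynamics -/

noncomputable def del (τ : ℝ) (n : ℕ) : ℝ := gSigma τ n - τ

lemma del_succ (τ : ℝ) (n : ℕ) :
    del τ (n + 1) = del τ n + (if del τ n ≤ 0 then 1 else -1) / ((n : ℝ) + 1) := by
  have hif : (del τ n ≤ 0) ↔ (gSigma τ n ≤ τ) := by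
    unfold del; constructor <;> intro <;> linarith
  have hrec : gSigma τ (n + 1) = gSigma τ n + (if gSigma τ n ≤ τ then (1:ℝ) else -1) / (n + 1) :=
    rfl
  by_cases h : del τ n ≤ 0
  · rw [if_pos h]
    unfold del
    rw [hrec, if_pos (hif.mp h)]
    ring
  · rw [if_neg h]
    unfold del
    rw [hrec, if_neg (fun hc => h (hif.mpr hc))]
    ring

lemma gSign_eq (τ : ℝ) (n : ℕ) :
    gSign τ (n + 1) = if del τ n ≤ 0 then 1 else -1 := by
  have hif : (del τ n ≤ 0) ↔ (gSigma τ n ≤ τ) := by unfold del; constructor <;> intro <;> linarith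
  unfold gSign
  rw [Nat.add_sub_cancel]
  by_cases h : gSigma τ n ≤ τ
  · rw [if_pos h, if_pos (hif.mpr h)]
  · rw [if_neg h, if_neg (fun hc => h (hif.mp hc))]

lemma forceDown (τ : ℝ) {k t : ℕ} (hth : Thr k ≤ t + 1) (h0 : 0 < del τ t)
    (hw : 1 ≤ k → del τ t ≤ av (k - 1) (t + 1)) :
    (∀ j, j ≤ 2 ^ k → del τ (t + j) = del τ t - Qp (t + 1) j) ∧
    (∀ j, j < 2 ^ k → gSign τ (t + 1 + j) = -tmSign j) := by
  have step : ∀ j, j < 2 ^ k → del τ (t + j) = del τ t - Qp (t + 1) j →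
      del τ (t + j + 1) = del τ t - Qp (t + 1) (j + 1) ∧ gSign τ (t + j + 1) = -tmSign j := by
    intro j hj hdel
    have hQ := Ppm k (t + 1) hth j hj
    rcases tmSign_cases j with hs | hs
    · have hQ1 : Qp (t + 1) j ≤ 0 := hQ.1 hs
      have hsign : ¬ (del τ (t + j) ≤ 0) := by rw [hdel]; push_neg; linarith
      constructor
      · rw [del_succ, if_neg hsign, hdel, Qp_succ, hs]
        push_cast; ring
      · rw [gSign_eq, if_neg hsign, hs]
    · have hk : 1 ≤ k := by
        by_contra hk0
        have hk00 : k = 0 := by omega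
        subst hk00
        interval_cases j
        rw [tmSign_zero] at hs; norm_num at hs
      have hQ2 : av (k - 1) (t + 1) ≤ Qp (t + 1) j := hQ.2 hs
      have hsign : del τ (t + j) ≤ 0 := by rw [hdel]; have := hw hk; linarith
      constructor
      · rw [del_succ, if_pos hsign, hdel, Qp_succ, hs]
        push_cast; ring
      · rw [gSign_eq, if_pos hsign, hs]
        norm_num
  have main : ∀ j, j ≤ 2 ^ k → del τ (t + j) = del τ t - Qp (t + 1) j := by
    intro j
    induction j with
    | zero => intro _; simp [Qp_zero]
    | succ i ih =>
      intro hij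
      have h1 := ih (by omega)
      have h2 := (step i (by omega) h1).1
      rw [show t + (i + 1) = t + i + 1 by ring]
      exact h2
  refine ⟨main, fun j hj => ?_⟩
  have h2 := (step j hj (main j (le_of_lt hj))).2
  rw [show t + 1 + j = t + j + 1 by ring]
  exact h2

lemma forceUp (τ : ℝ) {k t : ℕ} (hth : Thr k ≤ t + 1) (h0 : del τ t ≤ 0)
    (hw : 1 ≤ k → -del τ t < av (k - 1) (t + 1)) :
    (∀ j, j ≤ 2 ^ k → del τ (t + j) = del τ t + Qp (t + 1) j) ∧
    (∀ j, j < 2 ^ k → gSign τ (t + 1 + j) = tmSign j) := by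
  have step : ∀ j, j < 2 ^ k → del τ (t + j) = del τ t + Qp (t + 1) j →
      del τ (t + j + 1) = del τ t + Qp (t + 1) (j + 1) ∧ gSign τ (t + j + 1) = tmSign j := by
    intro j hj hdel
    have hQ := Ppm k (t + 1) hth j hj
    rcases tmSign_cases j with hs | hs
    · have hQ1 : Qp (t + 1) j ≤ 0 := hQ.1 hs
      have hsign : del τ (t + j) ≤ 0 := by rw [hdel]; linarith
      constructor
      · rw [del_succ, if_pos hsign, hdel, Qp_succ, hs]
        push_cast; ring
      · rw [gSign_eq, if_pos hsign, hs]
    · have hk : 1 ≤ k := by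
        by_contra hk0
        have hk00 : k = 0 := by omega
        subst hk00
        interval_cases j
        rw [tmSign_zero] at hs; norm_num at hs
      have hQ2 : av (k - 1) (t + 1) ≤ Qp (t + 1) j := hQ.2 hs
      have hsign : ¬ (del τ (t + j) ≤ 0) := by
        rw [hdel]; push_neg
        have := hw hk
        linarith
      constructor
      · rw [del_succ, if_neg hsign, hdel, Qp_succ, hs]
        push_cast; ring
      · rw [gSign_eq, if_neg hsign, hs]
  have main : ∀ j, j ≤ 2 ^ k → del τ (t + j) = del τ t + Qp (t + 1) j := by
    intro j
    induction j with
    | zero => intro _; simp [Qp_zero]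
    | succ i ih =>
      intro hij
      have h1 := ih (by omega)
      have h2 := (step i (by omega) h1).1
      rw [show t + (i + 1) = t + i + 1 by ring]
      exact h2
  refine ⟨main, fun j hj => ?_⟩
  have h2 := (step j hj (main j (le_of_lt hj))).2
  rw [show t + 1 + j = t + j + 1 by ring]
  exact h2

lemma downBlock (τ : ℝ) {k t : ℕ} (hth : Thr k ≤ t + 1) (h0 : 0 < del τ t)
    (hw : 1 ≤ k → del τ t ≤ av (k - 1) (t + 1)) :
    del τ (t + 2 ^ k) = del τ t - av k (t + 1) :=
  (forceDown τ hth h0 hw).1 (2 ^ k) le_rfl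

lemma upBlock (τ : ℝ) {k t : ℕ} (hth : Thr k ≤ t + 1) (h0 : del τ t ≤ 0)
    (hw : 1 ≤ k → -del τ t < av (k - 1) (t + 1)) :
    del τ (t + 2 ^ k) = del τ t + av k (t + 1) :=
  (forceUp τ hth h0 hw).1 (2 ^ k) le_rfl


/-! ### The main process lemmas -/

lemma processDown (τ : ℝ) {k t₀ : ℕ} (hX : τ ∉ Xset (k + 1)) (ht : Thr (k + 2) ≤ t₀)
    (h1 : 0 < del τ t₀) (h2 : del τ t₀ ≤ av k (t₀ + 1)) :
    ∃ t, t₀ ≤ t ∧ 0 < del τ t ∧ del τ t ≤ av (k + 1) (t + 1) := by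
  by_contra hcon
  push_neg at hcon
  have hno : ∀ t, t₀ ≤ t → 0 < del τ t → av (k + 1) (t + 1) < del τ t := by
    intro t h hp
    exact hcon t h hp
  have hL2 : (2:ℕ) ^ (k + 1) = 2 ^ k + 2 ^ k := by rw [pow_succ]; ring
  have hb : 0 < (2:ℕ) ^ (k + 1) := Nat.two_pow_pos _
  have hwin : ∀ p : ℕ, 1 ≤ p → (1 ≤ k → av k p ≤ av (k - 1) p) := by
    intro p hp hk
    obtain ⟨s, rfl⟩ : ∃ s, k = s + 1 := ⟨k - 1, by omega⟩
    simpa using av_level_le (m := s) (p := p) hp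
  -- the superblock step
  have SB : ∀ t, t₀ ≤ t →
      av (k + 1) (t + 1) < del τ t → del τ t ≤ av k (t + 1) →
      (av (k + 1) (t + 2 ^ (k + 1) + 1) < del τ (t + 2 ^ (k + 1)) ∧
        del τ (t + 2 ^ (k + 1)) ≤ av k (t + 2 ^ (k + 1) + 1)) ∧
      (∀ j, j < 2 ^ (k + 1) → gSign τ (t + 1 + j) = -tmSign j) := by
    intro t htt hV1 hV2
    have hth : ∀ m q : ℕ, m ≤ k + 2 → t ≤ q → Thr m ≤ q + 1 := by
      intro m q hm hq
      calc Thr m ≤ Thr (k + 2) := Thr_mono hm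
        _ ≤ t₀ := ht
        _ ≤ q + 1 := by omega
    have hdelpos : 0 < del τ t := lt_trans (av_pos (by omega)) hV1
    -- first (down) block
    obtain ⟨fd1, fd2⟩ := forceDown τ (k := k) (t := t) (hth k t (by omega) le_rfl) hdelpos
      (fun hk => le_trans hV2 (hwin (t + 1) (by omega) hk))
    have d1 : del τ (t + 2 ^ k) = del τ t - av k (t + 1) := fd1 (2 ^ k) le_rfl
    have hrec : av (k + 1) (t + 1) = av k (t + 1) - av k (t + 2 ^ k + 1) := by
      have := av_rec k (t + 1)
      rw [show t + 1 + 2 ^ k = t + 2 ^ k + 1 by ring] at this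
      exact this
    have hle0 : del τ (t + 2 ^ k) ≤ 0 := by rw [d1]; linarith
    have hgt : -del τ (t + 2 ^ k) < av k (t + 2 ^ k + 1) := by
      rw [d1]; linarith
    -- second (up) block
    obtain ⟨fu1, fu2⟩ := forceUp τ (k := k) (t := t + 2 ^ k)
      (hth k (t + 2 ^ k) (by omega) (Nat.le_add_right _ _)) hle0
      (fun hk => lt_of_lt_of_le hgt (hwin (t + 2 ^ k + 1) (by omega) hk))
    have d2 : del τ (t + 2 ^ (k + 1)) = del τ t - av (k + 1) (t + 1) := by
      have := fu1 (2 ^ k) le_rfl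
      rw [show t + 2 ^ k + 2 ^ k = t + 2 ^ (k + 1) by rw [hL2]; ring] at this
      have hQ : Qp (t + 2 ^ k + 1) (2 ^ k) = av k (t + 2 ^ k + 1) := rfl
      rw [hQ] at this
      rw [this, d1, hrec]
      ring
    have dpos : 0 < del τ (t + 2 ^ (k + 1)) := by rw [d2]; linarith
    have hV1' : av (k + 1) (t + 2 ^ (k + 1) + 1) < del τ (t + 2 ^ (k + 1)) :=
      hno _ (by omega) dpos
    have hup : del τ (t + 2 ^ (k + 1)) ≤ av k (t + 2 ^ k + 1) := by
      rw [d2]; linarith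
    have hV2' : del τ (t + 2 ^ (k + 1)) ≤ av k (t + 2 ^ (k + 1) + 1) := by
      by_contra hbig
      push_neg at hbig
      -- else branch: a further down block
      set t2 := t + 2 ^ (k + 1) with ht2
      obtain ⟨gd1, _⟩ := forceDown τ (k := k) (t := t2) (hth k t2 (by omega) (by omega)) dpos
        (fun hk => by
          refine le_trans hup (le_of_lt ?_)
          obtain ⟨s, rfl⟩ : ∃ s, k = s + 1 := ⟨k - 1, by omega⟩
          have := av_cmp (m := s) (p := t + 2 ^ (s + 1) + 1) (q := t2 + 1)
            (by omega) (hth s (t + 2 ^ (s + 1)) (by omega) (Nat.le_add_right _ _))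
            (by rw [ht2, hL2]
                have h5 : (2:ℕ) ^ (s + 2) = 2 ^ (s + 1) * 2 := pow_succ 2 (s + 1)
                omega)
          simpa using this)
      have d3 : del τ (t2 + 2 ^ k) = del τ t2 - av k (t2 + 1) := gd1 (2 ^ k) le_rfl
      have hrec2 : av (k + 1) (t + 2 ^ k + 1) = av k (t + 2 ^ k + 1) - av k (t2 + 1) := by
        have := av_rec k (t + 2 ^ k + 1)
        rw [show t + 2 ^ k + 1 + 2 ^ k = t2 + 1 by rw [ht2, hL2]; ring] at this
        exact this
      set t3 := t2 + 2 ^ k with ht3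
      have d3pos : 0 < del τ t3 := by rw [d3]; linarith
      have d3le : del τ t3 ≤ av (k + 1) (t + 2 ^ k + 1) := by rw [d3]; linarith
      have hno3 : av (k + 1) (t3 + 1) < del τ t3 := hno t3 (by omega) d3pos
      -- one more down block from t3
      obtain ⟨hd1, _⟩ := forceDown τ (k := k) (t := t3) (hth k t3 (by omega) (by omega)) d3pos
        (fun hk => by
          refine le_trans d3le (le_trans (av_level_le (by omega)) (le_of_lt ?_))
          obtain ⟨s, rfl⟩ : ∃ s, k = s + 1 := ⟨k - 1, by omega⟩
          have := av_cmp (m := s) (p := t + 2 ^ (s + 1) + 1) (q := t3 + 1)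
            (by omega) (hth s (t + 2 ^ (s + 1)) (by omega) (Nat.le_add_right _ _))
            (by rw [ht3, ht2, hL2]
                have h5 : (2:ℕ) ^ (s + 2) = 2 ^ (s + 1) * 2 := pow_succ 2 (s + 1)
                omega)
          simpa using this)
      have d4 : del τ (t3 + 2 ^ k) = del τ t3 - av k (t3 + 1) := hd1 (2 ^ k) le_rfl
      set t4 := t3 + 2 ^ k with ht4
      have hcmp1 : av (k + 1) (t + 2 ^ k + 1) < av k (t3 + 1) := by
        apply av_cmp (m := k) (p := t + 2 ^ k + 1) (q := t3 + 1) (by omega)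
          (hth k (t + 2 ^ k) (by omega) (Nat.le_add_right _ _))
        rw [ht3, ht2, hL2]
        have h5 : (2:ℕ) ^ (k + 2) = 2 ^ k * 4 := by rw [pow_add]; norm_num
        omega
      have d4le : del τ t4 ≤ 0 := by rw [ht4, d4]; linarith
      have d4gt : -del τ t4 < av k (t3 + 1) := by rw [ht4, d4]; linarith
      -- up block from t4
      obtain ⟨he1, _⟩ := forceUp τ (k := k) (t := t4) (hth k t4 (by omega) (by omega)) d4le
        (fun hk => by
          refine lt_of_lt_of_le d4gt (le_of_lt ?_)
          obtain ⟨s, rfl⟩ : ∃ s, k = s + 1 := ⟨k - 1, by omega⟩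
          have := av_cmp (m := s) (p := t3 + 1) (q := t4 + 1)
            (by omega) (hth s t3 (by omega) (by omega))
            (by rw [ht4]
                have h5 : (2:ℕ) ^ (s + 2) = 2 ^ (s + 1) * 2 := pow_succ 2 (s + 1)
                omega)
          simpa using this)
      have d5 : del τ (t4 + 2 ^ k) = del τ t4 + av k (t4 + 1) := he1 (2 ^ k) le_rfl
      set t5 := t4 + 2 ^ k with ht5
      have hrec3 : av (k + 2) (t + 2 ^ k + 1) = av (k + 1) (t + 2 ^ k + 1) - av (k + 1) (t3 + 1) := by
        have := av_rec (k + 1) (t + 2 ^ k + 1)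
        rw [show t + 2 ^ k + 1 + 2 ^ (k + 1) = t3 + 1 by rw [ht3, ht2, hL2]; ring] at this
        exact this
      have hrec4 : av (k + 1) (t3 + 1) = av k (t3 + 1) - av k (t4 + 1) := by
        have := av_rec k (t3 + 1)
        rw [show t3 + 1 + 2 ^ k = t4 + 1 by rw [ht4]; ring] at this
        exact this
      have d5pos : 0 < del τ t5 := by
        rw [ht5, d5, d4]
        have := hno3
        linarith
      have d5le : del τ t5 ≤ av (k + 1) (t5 + 1) := by
        have hcmp2 : av (k + 2) (t + 2 ^ k + 1) < av (k + 1) (t5 + 1) := by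
          apply av_cmp (m := k + 1) (p := t + 2 ^ k + 1) (q := t5 + 1) (by omega)
            (hth (k + 1) (t + 2 ^ k) (by omega) (Nat.le_add_right _ _))
          rw [ht5, ht4, ht3, ht2, hL2]
          have h5 : (2:ℕ) ^ (k + 1 + 2) = 2 ^ k * 8 := by rw [pow_add, pow_succ]; ring
          omega
        rw [ht5, d5, d4]
        have e : del τ t3 - av k (t3 + 1) + av k (t4 + 1) = del τ t3 - av (k + 1) (t3 + 1) := by
          rw [hrec4]; ring
        rw [e]
        linarith
      exact absurd (hno t5 (by omega) d5pos) (by push_neg; exact d5le)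
    refine ⟨⟨hV1', hV2'⟩, ?_⟩
    intro j hj
    rcases Nat.lt_or_ge j (2 ^ k) with hjk | hjk
    · exact fd2 j hjk
    · set u := j - 2 ^ k with hu
      have huk : u < 2 ^ k := by omega
      have hflip : tmSign j = -tmSign u := by
        rw [show j = u + 2 ^ k by omega]
        exact tmSign_flip huk
      have := fu2 u huk
      rw [show t + 2 ^ k + 1 + u = t + 1 + j by omega] at this
      rw [this, hflip]
      ring
  -- iterate the superblock
  have key : ∀ r : ℕ, av (k + 1) (t₀ + 2 ^ (k + 1) * r + 1) < del τ (t₀ + 2 ^ (k + 1) * r) ∧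
      del τ (t₀ + 2 ^ (k + 1) * r) ≤ av k (t₀ + 2 ^ (k + 1) * r + 1) := by
    intro r
    induction r with
    | zero =>
      simp only [Nat.mul_zero, Nat.add_zero]
      exact ⟨hno t₀ le_rfl h1, h2⟩
    | succ i ih =>
      have := (SB (t₀ + 2 ^ (k + 1) * i) (Nat.le_add_right _ _) ih.1 ih.2).1
      rw [show t₀ + 2 ^ (k + 1) * i + 2 ^ (k + 1) = t₀ + 2 ^ (k + 1) * (i + 1) by ring] at this
      exact this
  have signs : ∀ n, t₀ + 1 ≤ n → gSign τ n = -tmSign ((n - (t₀ + 1)) % 2 ^ (k + 1)) := by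
    intro n hn
    set d := n - (t₀ + 1) with hd
    set r := d / 2 ^ (k + 1) with hrr
    set j := d % 2 ^ (k + 1) with hjj
    have hdd : 2 ^ (k + 1) * r + j = d := Nat.div_add_mod d _
    have hjlt : j < 2 ^ (k + 1) := Nat.mod_lt _ hb
    have e1 : (t₀ + 1) + d = n := Nat.add_sub_cancel' hn
    have e : t₀ + 2 ^ (k + 1) * r + 1 + j = n := by
      calc t₀ + 2 ^ (k + 1) * r + 1 + j = (t₀ + 1) + (2 ^ (k + 1) * r + j) := by ring
        _ = (t₀ + 1) + d := by rw [hdd]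
        _ = n := e1
    have := (SB (t₀ + 2 ^ (k + 1) * r) (Nat.le_add_right _ _) (key r).1 (key r).2).2 j hjlt
    rw [e] at this
    exact this
  apply hX
  set b := 2 ^ (k + 1) with hbdef
  refine ⟨t₀ + 1, (2 ^ k + (b - (t₀ + 1) % b)) % b, Nat.mod_lt _ hb, ?_⟩
  intro n _ hnN
  rw [signs n hnN]
  unfold fPer
  have e1 : (t₀ + 1) + (n - (t₀ + 1)) = n := Nat.add_sub_cancel' hnN
  set d := n - (t₀ + 1) with hd
  set m := (2 ^ k + (b - (t₀ + 1) % b)) % b with hm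
  have hmod : (n + m) % b = (d + 2 ^ k) % b := by
    have h1 : (t₀ + 1) + m ≡ ((t₀ + 1) % b) + ((2 ^ k + (b - (t₀ + 1) % b))) [MOD b] :=
      Nat.ModEq.add (Nat.mod_modEq _ b).symm (Nat.mod_modEq _ b)
    have h3 : ((t₀ + 1) % b) + (2 ^ k + (b - (t₀ + 1) % b)) = 2 ^ k + b := by
      have hrle : (t₀ + 1) % b ≤ b := le_of_lt (Nat.mod_lt _ hb)
      calc ((t₀ + 1) % b) + (2 ^ k + (b - (t₀ + 1) % b))
          = 2 ^ k + (((t₀ + 1) % b) + (b - (t₀ + 1) % b)) := by ring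
        _ = 2 ^ k + b := by rw [Nat.add_sub_cancel' hrle]
    have h4 : 2 ^ k + b ≡ 2 ^ k + 0 [MOD b] :=
      Nat.ModEq.add_left _ ((Nat.modEq_zero_iff_dvd).mpr dvd_rfl)
    have h5 : (t₀ + 1) + m ≡ 2 ^ k [MOD b] := by
      calc (t₀ + 1) + m ≡ ((t₀ + 1) % b) + ((2 ^ k + (b - (t₀ + 1) % b))) [MOD b] := h1
        _ = 2 ^ k + b := h3
        _ ≡ 2 ^ k + 0 [MOD b] := h4
        _ = 2 ^ k := by ring
    have h6 : n + m = d + ((t₀ + 1) + m) := by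
      rw [← e1]; ring
    rw [h6]
    exact Nat.ModEq.add_left d h5
  rw [hmod, tmSign_mod_flip]


lemma processUp (τ : ℝ) {k t₀ : ℕ} (hX : τ ∉ Xset (k + 1)) (ht : Thr (k + 2) ≤ t₀)
    (h1 : del τ t₀ ≤ 0) (h2 : -av k (t₀ + 1) < del τ t₀) :
    ∃ t, t₀ ≤ t ∧ -av (k + 1) (t + 1) < del τ t ∧ del τ t ≤ 0 := by
  by_contra hcon
  push_neg at hcon
  have hno : ∀ t, t₀ ≤ t → -av (k + 1) (t + 1) < del τ t → 0 < del τ t := by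
    intro t h hgt
    have := hcon t h hgt
    linarith
  have hno' : ∀ t, t₀ ≤ t → del τ t ≤ 0 → del τ t ≤ -av (k + 1) (t + 1) := by
    intro t h hle
    by_contra hgt
    push_neg at hgt
    exact absurd hle (not_le.mpr (hno t h hgt))
  have hL2 : (2:ℕ) ^ (k + 1) = 2 ^ k + 2 ^ k := by rw [pow_succ]; ring
  have hb : 0 < (2:ℕ) ^ (k + 1) := Nat.two_pow_pos _
  have hwin : ∀ p : ℕ, 1 ≤ p → (1 ≤ k → av k p ≤ av (k - 1) p) := by
    intro p hp hk
    obtain ⟨s, rfl⟩ : ∃ s, k = s + 1 := ⟨k - 1, by omega⟩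
    simpa using av_level_le (m := s) (p := p) hp
  have SB : ∀ t, t₀ ≤ t →
      -av k (t + 1) < del τ t → del τ t ≤ -av (k + 1) (t + 1) →
      (-av k (t + 2 ^ (k + 1) + 1) < del τ (t + 2 ^ (k + 1)) ∧
        del τ (t + 2 ^ (k + 1)) ≤ -av (k + 1) (t + 2 ^ (k + 1) + 1)) ∧
      (∀ j, j < 2 ^ (k + 1) → gSign τ (t + 1 + j) = tmSign j) := by
    intro t htt hV1 hV2
    have hth : ∀ m q : ℕ, m ≤ k + 2 → t ≤ q → Thr m ≤ q + 1 := by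
      intro m q hm hq
      calc Thr m ≤ Thr (k + 2) := Thr_mono hm
        _ ≤ t₀ := ht
        _ ≤ q + 1 := by omega
    have hdelneg : del τ t ≤ 0 := by
      have := av_pos (m := k + 1) (p := t + 1) (by omega)
      linarith
    obtain ⟨fu1, fu2⟩ := forceUp τ (k := k) (t := t) (hth k t (by omega) le_rfl) hdelneg
      (fun hk => lt_of_lt_of_le (by linarith : -del τ t < av k (t + 1))
        (hwin (t + 1) (by omega) hk))
    have d1 : del τ (t + 2 ^ k) = del τ t + av k (t + 1) := fu1 (2 ^ k) le_rfl
    have hrec : av (k + 1) (t + 1) = av k (t + 1) - av k (t + 2 ^ k + 1) := by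
      have := av_rec k (t + 1)
      rw [show t + 1 + 2 ^ k = t + 2 ^ k + 1 by ring] at this
      exact this
    have dpos1 : 0 < del τ (t + 2 ^ k) := by rw [d1]; linarith
    have dle1 : del τ (t + 2 ^ k) ≤ av k (t + 2 ^ k + 1) := by
      rw [d1]
      have := av_pos (m := k + 1) (p := t + 1) (by omega)
      linarith
    obtain ⟨fd1, fd2⟩ := forceDown τ (k := k) (t := t + 2 ^ k)
      (hth k (t + 2 ^ k) (by omega) (Nat.le_add_right _ _)) dpos1
      (fun hk => le_trans dle1 (hwin (t + 2 ^ k + 1) (by omega) hk))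
    have d2 : del τ (t + 2 ^ (k + 1)) = del τ t + av (k + 1) (t + 1) := by
      have := fd1 (2 ^ k) le_rfl
      rw [show t + 2 ^ k + 2 ^ k = t + 2 ^ (k + 1) by rw [hL2]; ring] at this
      have hQ : Qp (t + 2 ^ k + 1) (2 ^ k) = av k (t + 2 ^ k + 1) := rfl
      rw [hQ] at this
      rw [this, d1, hrec]
      ring
    have hle0' : del τ (t + 2 ^ (k + 1)) ≤ 0 := by rw [d2]; linarith
    have hV2' : del τ (t + 2 ^ (k + 1)) ≤ -av (k + 1) (t + 2 ^ (k + 1) + 1) :=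
      hno' _ (by omega) hle0'
    have hlow : -av k (t + 2 ^ k + 1) < del τ (t + 2 ^ (k + 1)) := by
      rw [d2]; linarith
    have hV1' : -av k (t + 2 ^ (k + 1) + 1) < del τ (t + 2 ^ (k + 1)) := by
      by_contra hbig
      push_neg at hbig
      set t2 := t + 2 ^ (k + 1) with ht2
      -- extra up block from t2
      obtain ⟨gu1, _⟩ := forceUp τ (k := k) (t := t2) (hth k t2 (by omega) (by omega)) hle0'
        (fun hk => by
          obtain ⟨s, rfl⟩ : ∃ s, k = s + 1 := ⟨k - 1, by omega⟩
          have hc := av_cmp (m := s) (p := t + 2 ^ (s + 1) + 1) (q := t2 + 1) (by omega)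
            (hth s (t + 2 ^ (s + 1)) (by omega) (Nat.le_add_right _ _))
            (by rw [ht2, hL2]
                have h5 : (2:ℕ) ^ (s + 2) = 2 ^ (s + 1) * 2 := pow_succ 2 (s + 1)
                omega)
          have hlt : -del τ t2 < av (s + 1) (t + 2 ^ (s + 1) + 1) := by linarith
          simpa using lt_trans hlt hc)
      have d3 : del τ (t2 + 2 ^ k) = del τ t2 + av k (t2 + 1) := gu1 (2 ^ k) le_rfl
      have hrec2 : av (k + 1) (t + 2 ^ k + 1) = av k (t + 2 ^ k + 1) - av k (t2 + 1) := by
        have := av_rec k (t + 2 ^ k + 1)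
        rw [show t + 2 ^ k + 1 + 2 ^ k = t2 + 1 by rw [ht2, hL2]; ring] at this
        exact this
      set t3 := t2 + 2 ^ k with ht3
      have d3le : del τ t3 ≤ 0 := by rw [d3]; linarith
      have d3gt : -av (k + 1) (t + 2 ^ k + 1) < del τ t3 := by
        rw [d3, hrec2]; linarith
      have hno3 : del τ t3 ≤ -av (k + 1) (t3 + 1) := hno' t3 (by omega) d3le
      -- one more up block from t3
      obtain ⟨hu1, _⟩ := forceUp τ (k := k) (t := t3) (hth k t3 (by omega) (by omega)) d3le
        (fun hk => by
          have hstep : -del τ t3 < av (k + 1) (t + 2 ^ k + 1) := by linarith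
          refine lt_trans hstep (lt_of_le_of_lt (av_level_le (by omega)) ?_)
          obtain ⟨s, rfl⟩ : ∃ s, k = s + 1 := ⟨k - 1, by omega⟩
          have hc := av_cmp (m := s) (p := t + 2 ^ (s + 1) + 1) (q := t3 + 1) (by omega)
            (hth s (t + 2 ^ (s + 1)) (by omega) (Nat.le_add_right _ _))
            (by rw [ht3, ht2, hL2]
                have h5 : (2:ℕ) ^ (s + 2) = 2 ^ (s + 1) * 2 := pow_succ 2 (s + 1)
                omega)
          simpa using hc)
      have d4 : del τ (t3 + 2 ^ k) = del τ t3 + av k (t3 + 1) := hu1 (2 ^ k) le_rfl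
      set t4 := t3 + 2 ^ k with ht4
      have hcmp1 : av (k + 1) (t + 2 ^ k + 1) < av k (t3 + 1) := by
        apply av_cmp (m := k) (p := t + 2 ^ k + 1) (q := t3 + 1) (by omega)
          (hth k (t + 2 ^ k) (by omega) (Nat.le_add_right _ _))
        rw [ht3, ht2, hL2]
        have h5 : (2:ℕ) ^ (k + 2) = 2 ^ k * 4 := by rw [pow_add]; norm_num
        omega
      have d4pos : 0 < del τ t4 := by rw [ht4, d4]; linarith
      have d4le : del τ t4 ≤ av k (t3 + 1) := by rw [ht4, d4]; linarith
      -- down block from t4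
      obtain ⟨he1, _⟩ := forceDown τ (k := k) (t := t4) (hth k t4 (by omega) (by omega)) d4pos
        (fun hk => by
          refine le_trans d4le (le_of_lt ?_)
          obtain ⟨s, rfl⟩ : ∃ s, k = s + 1 := ⟨k - 1, by omega⟩
          have hc := av_cmp (m := s) (p := t3 + 1) (q := t4 + 1) (by omega)
            (hth s t3 (by omega) (by omega))
            (by rw [ht4]
                have h5 : (2:ℕ) ^ (s + 2) = 2 ^ (s + 1) * 2 := pow_succ 2 (s + 1)
                omega)
          simpa using hc)
      have d5 : del τ (t4 + 2 ^ k) = del τ t4 - av k (t4 + 1) := he1 (2 ^ k) le_rfl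
      set t5 := t4 + 2 ^ k with ht5
      have hrec3 : av (k + 2) (t + 2 ^ k + 1)
          = av (k + 1) (t + 2 ^ k + 1) - av (k + 1) (t3 + 1) := by
        have := av_rec (k + 1) (t + 2 ^ k + 1)
        rw [show t + 2 ^ k + 1 + 2 ^ (k + 1) = t3 + 1 by rw [ht3, ht2, hL2]; ring] at this
        exact this
      have hrec4 : av (k + 1) (t3 + 1) = av k (t3 + 1) - av k (t4 + 1) := by
        have := av_rec k (t3 + 1)
        rw [show t3 + 1 + 2 ^ k = t4 + 1 by rw [ht4]; ring] at this
        exact this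
      have d5le : del τ t5 ≤ 0 := by
        rw [ht5, d5, d4]
        have e : del τ t3 + av k (t3 + 1) - av k (t4 + 1) = del τ t3 + av (k + 1) (t3 + 1) := by
          rw [hrec4]; ring
        rw [e]
        linarith
      have d5gt : -av (k + 1) (t5 + 1) < del τ t5 := by
        have hcmp2 : av (k + 2) (t + 2 ^ k + 1) < av (k + 1) (t5 + 1) := by
          apply av_cmp (m := k + 1) (p := t + 2 ^ k + 1) (q := t5 + 1) (by omega)
            (hth (k + 1) (t + 2 ^ k) (by omega) (Nat.le_add_right _ _))
          rw [ht5, ht4, ht3, ht2, hL2]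
          have h5 : (2:ℕ) ^ (k + 1 + 2) = 2 ^ k * 8 := by rw [pow_add, pow_succ]; ring
          omega
        rw [ht5, d5, d4]
        have e : del τ t3 + av k (t3 + 1) - av k (t4 + 1) = del τ t3 + av (k + 1) (t3 + 1) := by
          rw [hrec4]; ring
        rw [e]
        have : -av (k + 2) (t + 2 ^ k + 1) < del τ t3 + av (k + 1) (t3 + 1) := by
          rw [hrec3] at *
          linarith
        linarith
      exact absurd (hno t5 (by omega) d5gt) (by push_neg; exact d5le)
    refine ⟨⟨hV1', hV2'⟩, ?_⟩
    intro j hj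
    rcases Nat.lt_or_ge j (2 ^ k) with hjk | hjk
    · exact fu2 j hjk
    · set u := j - 2 ^ k with hu
      have huk : u < 2 ^ k := by omega
      have hflip : tmSign j = -tmSign u := by
        rw [show j = u + 2 ^ k by omega]
        exact tmSign_flip huk
      have := fd2 u huk
      rw [show t + 2 ^ k + 1 + u = t + 1 + j by omega] at this
      rw [this, hflip]
  have key : ∀ r : ℕ, -av k (t₀ + 2 ^ (k + 1) * r + 1) < del τ (t₀ + 2 ^ (k + 1) * r) ∧
      del τ (t₀ + 2 ^ (k + 1) * r) ≤ -av (k + 1) (t₀ + 2 ^ (k + 1) * r + 1) := by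
    intro r
    induction r with
    | zero =>
      simp only [Nat.mul_zero, Nat.add_zero]
      exact ⟨h2, hno' t₀ le_rfl h1⟩
    | succ i ih =>
      have := (SB (t₀ + 2 ^ (k + 1) * i) (Nat.le_add_right _ _) ih.1 ih.2).1
      rw [show t₀ + 2 ^ (k + 1) * i + 2 ^ (k + 1) = t₀ + 2 ^ (k + 1) * (i + 1) by ring] at this
      exact this
  have signs : ∀ n, t₀ + 1 ≤ n → gSign τ n = tmSign ((n - (t₀ + 1)) % 2 ^ (k + 1)) := by
    intro n hn
    set d := n - (t₀ + 1) with hd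
    set r := d / 2 ^ (k + 1) with hrr
    set j := d % 2 ^ (k + 1) with hjj
    have hdd : 2 ^ (k + 1) * r + j = d := Nat.div_add_mod d _
    have hjlt : j < 2 ^ (k + 1) := Nat.mod_lt _ hb
    have e1 : (t₀ + 1) + d = n := Nat.add_sub_cancel' hn
    have e : t₀ + 2 ^ (k + 1) * r + 1 + j = n := by
      calc t₀ + 2 ^ (k + 1) * r + 1 + j = (t₀ + 1) + (2 ^ (k + 1) * r + j) := by ring
        _ = (t₀ + 1) + d := by rw [hdd]
        _ = n := e1
    have := (SB (t₀ + 2 ^ (k + 1) * r) (Nat.le_add_right _ _) (key r).1 (key r).2).2 j hjlt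
    rw [e] at this
    exact this
  apply hX
  set b := 2 ^ (k + 1) with hbdef
  refine ⟨t₀ + 1, (b - (t₀ + 1) % b) % b, Nat.mod_lt _ hb, ?_⟩
  intro n _ hnN
  rw [signs n hnN]
  unfold fPer
  have e1 : (t₀ + 1) + (n - (t₀ + 1)) = n := Nat.add_sub_cancel' hnN
  set d := n - (t₀ + 1) with hd
  set m := (b - (t₀ + 1) % b) % b with hm
  have hmod : (n + m) % b = d % b := by
    have h1 : (t₀ + 1) + m ≡ ((t₀ + 1) % b) + (b - (t₀ + 1) % b) [MOD b] :=
      Nat.ModEq.add (Nat.mod_modEq _ b).symm (Nat.mod_modEq _ b)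
    have h3 : ((t₀ + 1) % b) + (b - (t₀ + 1) % b) = b := by
      have hrle : (t₀ + 1) % b ≤ b := le_of_lt (Nat.mod_lt _ hb)
      rw [Nat.add_sub_cancel' hrle]
    have h5 : (t₀ + 1) + m ≡ 0 [MOD b] := by
      calc (t₀ + 1) + m ≡ ((t₀ + 1) % b) + (b - (t₀ + 1) % b) [MOD b] := h1
        _ = b := h3
        _ ≡ 0 [MOD b] := (Nat.modEq_zero_iff_dvd).mpr dvd_rfl
    have h6 : n + m = d + ((t₀ + 1) + m) := by
      rw [← e1]; ring
    calc (n + m) % b = (d + ((t₀ + 1) + m)) % b := by rw [h6]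
      _ = (d + 0) % b := Nat.ModEq.add_left d h5
      _ = d % b := by rw [Nat.add_zero]
  rw [hmod]


/-! ### Base level -/

lemma av_zero (p : ℕ) : av 0 p = 1 / (p : ℝ) := by
  unfold av Qp
  rw [pow_zero, Finset.sum_range_one, tmSign_zero]
  norm_num

/-- harmonic partial sums -/
noncomputable def har (n : ℕ) : ℝ := ∑ i ∈ range n, (1 / ((i : ℝ) + 1))

lemma har_succ (n : ℕ) : har (n + 1) = har n + 1 / ((n : ℝ) + 1) := Finset.sum_range_succ _ n

lemma har_unbounded (C : ℝ) (M : ℕ) : ∃ n, M ≤ n ∧ C ≤ har n := by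
  have ht := Real.tendsto_sum_range_one_div_nat_succ_atTop
  have h1 : ∀ᶠ n in Filter.atTop, C ≤ har n := ht.eventually_ge_atTop C
  have h2 : ∀ᶠ n in Filter.atTop, M ≤ n := Filter.eventually_ge_atTop M
  obtain ⟨n, hn1, hn2⟩ := (h2.and h1).exists
  exact ⟨n, hn1, hn2⟩

lemma noPosForever (τ : ℝ) (M : ℕ) : ¬ (∀ t, M ≤ t → 0 < del τ t) := by
  intro hall
  have iter : ∀ r : ℕ, del τ (M + r) = del τ M - (har (M + r) - har M) := by
    intro r
    induction r with
    | zero => simp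
    | succ i ih =>
      have hpos := hall (M + i) (Nat.le_add_right _ _)
      have hd := del_succ τ (M + i)
      rw [if_neg (by linarith)] at hd
      rw [show M + (i + 1) = M + i + 1 by ring, hd, ih, har_succ]
      push_cast
      ring
  obtain ⟨n, hn1, hn2⟩ := har_unbounded (del τ M + har M) M
  have h3 := iter (n - M)
  rw [Nat.add_sub_cancel' hn1] at h3
  have h4 := hall n (by omega)
  linarith

lemma noNegForever (τ : ℝ) (M : ℕ) : ¬ (∀ t, M ≤ t → del τ t ≤ 0) := by
  intro hall
  have iter : ∀ r : ℕ, del τ (M + r) = del τ M + (har (M + r) - har M) := by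
    intro r
    induction r with
    | zero => simp
    | succ i ih =>
      have hpos := hall (M + i) (Nat.le_add_right _ _)
      have hd := del_succ τ (M + i)
      rw [if_pos (by linarith)] at hd
      rw [show M + (i + 1) = M + i + 1 by ring, hd, ih, har_succ]
      push_cast
      ring
  obtain ⟨n, hn1, hn2⟩ := har_unbounded (-del τ M + har M + 1) M
  have h3 := iter (n - M)
  rw [Nat.add_sub_cancel' hn1] at h3
  have h4 := hall n (by omega)
  linarith

lemma exists_up_crossing (τ : ℝ) (M : ℕ) :
    ∃ t, M ≤ t ∧ del τ t ≤ 0 ∧ 0 < del τ (t + 1) := by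
  by_contra hcon
  push_neg at hcon
  obtain ⟨t2, ht2, h2⟩ : ∃ t2, M ≤ t2 ∧ del τ t2 ≤ 0 := by
    have h1 := noPosForever τ M
    push_neg at h1
    obtain ⟨t2, ht2, h2⟩ := h1
    exact ⟨t2, ht2, h2⟩
  have hstay : ∀ r, del τ (t2 + r) ≤ 0 := by
    intro r
    induction r with
    | zero => simpa using h2
    | succ i ih =>
      have := hcon (t2 + i) (by omega) ih
      rw [show t2 + (i + 1) = (t2 + i) + 1 by ring]
      exact this
  apply noNegForever τ t2
  intro t ht
  have := hstay (t - t2)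
  rwa [Nat.add_sub_cancel' ht] at this

lemma exists_down_crossing (τ : ℝ) (M : ℕ) :
    ∃ t, M ≤ t ∧ 0 < del τ t ∧ del τ (t + 1) ≤ 0 := by
  by_contra hcon
  push_neg at hcon
  obtain ⟨t2, ht2, h2⟩ : ∃ t2, M ≤ t2 ∧ 0 < del τ t2 := by
    have h1 := noNegForever τ M
    push_neg at h1
    obtain ⟨t2, ht2, h2⟩ := h1
    exact ⟨t2, ht2, h2⟩
  have hstay : ∀ r, 0 < del τ (t2 + r) := by
    intro r
    induction r with
    | zero => simpa using h2
    | succ i ih =>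
      have := hcon (t2 + i) (by omega) ih
      rw [show t2 + (i + 1) = (t2 + i) + 1 by ring]
      exact this
  apply noPosForever τ t2
  intro t ht
  have := hstay (t - t2)
  rwa [Nat.add_sub_cancel' ht] at this

lemma base_down (τ : ℝ) (N : ℕ) :
    ∃ t, N ≤ t ∧ 0 < del τ t ∧ del τ t ≤ av 0 (t + 1) := by
  obtain ⟨t, ht, h0, h1⟩ := exists_up_crossing τ (max N 1)
  have ht1 : 1 ≤ t := le_trans (le_max_right N 1) ht
  have htR : (1:ℝ) ≤ (t:ℝ) := by exact_mod_cast ht1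
  have hstep : del τ (t + 1) = del τ t + 1 / ((t:ℝ) + 1) := by
    rw [del_succ, if_pos h0]
  have hub1 : del τ (t + 1) ≤ 1 / ((t:ℝ) + 1) := by rw [hstep]; linarith
  by_cases hc : del τ (t + 1) ≤ av 0 (t + 1 + 1)
  · exact ⟨t + 1, by omega, h1, hc⟩
  · push_neg at hc
    rw [av_zero] at hc
    have hcast1 : ((t + 1 + 1 : ℕ) : ℝ) = (t:ℝ) + 2 := by push_cast; ring
    rw [hcast1] at hc
    have hstep2 : del τ (t + 1 + 1) = del τ (t + 1) - 1 / ((t:ℝ) + 2) := by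
      rw [del_succ, if_neg (by push_neg; exact h1)]
      push_cast
      ring
    have hpos2 : 0 < del τ (t + 1 + 1) := by rw [hstep2]; linarith
    have hle2 : del τ (t + 1 + 1) ≤ av 0 (t + 1 + 1 + 1) := by
      rw [av_zero]
      have hcast2 : ((t + 1 + 1 + 1 : ℕ) : ℝ) = (t:ℝ) + 3 := by push_cast; ring
      rw [hcast2, hstep2]
      have key : 1 / ((t:ℝ) + 1) - 1 / ((t:ℝ) + 2) ≤ 1 / ((t:ℝ) + 3) := by
        rw [div_sub_div _ _ (by linarith : (t:ℝ) + 1 ≠ 0) (by linarith : (t:ℝ) + 2 ≠ 0),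
          div_le_div_iff₀ (by nlinarith) (by linarith)]
        nlinarith
      linarith
    exact ⟨t + 1 + 1, by omega, hpos2, hle2⟩

lemma base_up (τ : ℝ) (N : ℕ) :
    ∃ t, N ≤ t ∧ -av 0 (t + 1) < del τ t ∧ del τ t ≤ 0 := by
  obtain ⟨t, ht, h0, h1⟩ := exists_down_crossing τ (max N 1)
  have ht1 : 1 ≤ t := le_trans (le_max_right N 1) ht
  have htR : (1:ℝ) ≤ (t:ℝ) := by exact_mod_cast ht1
  have hstep : del τ (t + 1) = del τ t - 1 / ((t:ℝ) + 1) := by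
    rw [del_succ, if_neg (by push_neg; exact h0)]
    ring
  have hlb1 : -(1 / ((t:ℝ) + 1)) < del τ (t + 1) := by rw [hstep]; linarith
  by_cases hc : -av 0 (t + 1 + 1) < del τ (t + 1)
  · exact ⟨t + 1, by omega, hc, h1⟩
  · push_neg at hc
    rw [av_zero] at hc
    have hcast1 : ((t + 1 + 1 : ℕ) : ℝ) = (t:ℝ) + 2 := by push_cast; ring
    rw [hcast1] at hc
    have hstep2 : del τ (t + 1 + 1) = del τ (t + 1) + 1 / ((t:ℝ) + 2) := by
      rw [del_succ, if_pos h1]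
      push_cast
      ring
    have hneg2 : del τ (t + 1 + 1) ≤ 0 := by rw [hstep2]; linarith
    have hgt2 : -av 0 (t + 1 + 1 + 1) < del τ (t + 1 + 1) := by
      rw [av_zero]
      have hcast2 : ((t + 1 + 1 + 1 : ℕ) : ℝ) = (t:ℝ) + 3 := by push_cast; ring
      rw [hcast2, hstep2]
      have key : 1 / ((t:ℝ) + 1) - 1 / ((t:ℝ) + 2) ≤ 1 / ((t:ℝ) + 3) := by
        rw [div_sub_div _ _ (by linarith : (t:ℝ) + 1 ≠ 0) (by linarith : (t:ℝ) + 2 ≠ 0),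
          div_le_div_iff₀ (by nlinarith) (by linarith)]
        nlinarith
      linarith
    exact ⟨t + 1 + 1, by omega, hgt2, hneg2⟩

/-! ### The main inductive statement -/

lemma good_all (τ : ℝ) (K : ℕ) (hτ : ∀ h, 1 ≤ h → h ≤ K → τ ∉ Xset h) :
    (∀ N, ∃ t, N ≤ t ∧ 0 < del τ t ∧ del τ t ≤ av K (t + 1)) ∧
    (∀ N, ∃ t, N ≤ t ∧ -av K (t + 1) < del τ t ∧ del τ t ≤ 0) := by
  induction K with
  | zero => exact ⟨base_down τ, base_up τ⟩
  | succ k ih =>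
    obtain ⟨G1, G2⟩ := ih (fun h h1 h2 => hτ h h1 (by omega))
    have hXk : τ ∉ Xset (k + 1) := hτ (k + 1) (by omega) le_rfl
    constructor
    · intro N
      obtain ⟨t, ht1, ht2, ht3⟩ := G1 (max N (Thr (k + 2)))
      obtain ⟨t', h1', h2', h3'⟩ := processDown τ hXk (le_trans (le_max_right _ _) ht1) ht2 ht3
      exact ⟨t', le_trans (le_max_left _ _) (le_trans ht1 h1'), h2', h3'⟩
    · intro N
      obtain ⟨t, ht1, ht2, ht3⟩ := G2 (max N (Thr (k + 2)))
      obtain ⟨t', h1', h2', h3'⟩ := processUp τ hXk (le_trans (le_max_right _ _) ht1) ht3 ht2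
      exact ⟨t', le_trans (le_max_left _ _) (le_trans ht1 h1'), h2', h3'⟩


/-! ### Injectivity of the greedy partial sums (2-adic argument) -/

lemma val_sum_ge (c : ℤ) (s : Finset ℕ) (f : ℕ → ℚ)
    (hf : ∀ i ∈ s, f i ≠ 0 ∧ c ≤ padicValRat 2 (f i)) :
    (∑ i ∈ s, f i) = 0 ∨ ((∑ i ∈ s, f i) ≠ 0 ∧ c ≤ padicValRat 2 (∑ i ∈ s, f i)) := by
  classical
  induction s using Finset.induction_on with
  | empty => left; simp
  | @insert a s' ha ih =>
    have hfa := hf a (Finset.mem_insert_self a s')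
    have ih' := ih (fun i hi => hf i (Finset.mem_insert_of_mem hi))
    rw [Finset.sum_insert ha]
    rcases ih' with h0 | ⟨hne, hval⟩
    · rw [h0, add_zero]
      right
      exact hfa
    · by_cases hz : f a + ∑ i ∈ s', f i = 0
      · left; exact hz
      · right
        refine ⟨hz, le_trans (le_min hfa.2 hval) (padicValRat.min_le_padicValRat_add hz)⟩

lemma signed_harmonic_ne_zero {a b : ℕ} (hab : a < b) (g : ℕ → ℚ)
    (hg : ∀ i, g i = 1 ∨ g i = -1) :
    (∑ i ∈ Finset.Ioc a b, g i / i) ≠ 0 := by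
  intro h0
  classical
  set s := Finset.Ioc a b with hs
  have hne : s.Nonempty := ⟨b, by simp [hs, hab]⟩
  obtain ⟨i₀, hi₀s, hi₀⟩ := Finset.exists_mem_eq_sup s hne (padicValNat 2)
  set v := padicValNat 2 i₀ with hv
  have hmem : ∀ i ∈ s, a < i ∧ i ≤ b := by
    intro i hi
    rw [hs] at hi
    exact Finset.mem_Ioc.mp hi
  have hposmem : ∀ i ∈ s, 1 ≤ i := fun i hi => by have := (hmem i hi).1; omega
  -- uniqueness of maximal valuation
  have key : ∀ x y, x ∈ s → y ∈ s → x < y →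
      padicValNat 2 x = v → padicValNat 2 y = v → False := by
    intro x y hxs hys hxy hvx hvy
    have hx0 : x ≠ 0 := by have := hposmem x hxs; omega
    have hy0 : y ≠ 0 := by have := hposmem y hys; omega
    have hdx : 2 ^ v ∣ x := by rw [← hvx]; exact pow_padicValNat_dvd
    have hdy : 2 ^ v ∣ y := by rw [← hvy]; exact pow_padicValNat_dvd
    have hndx : ¬ 2 ^ (v + 1) ∣ x := by
      rw [padicValNat_dvd_iff_le hx0, hvx]
      omega
    -- quotient of x is odd
    obtain ⟨d, hd⟩ := id hdx
    have hdodd : ¬ 2 ∣ d := by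
      rintro ⟨e, he⟩
      refine hndx ⟨e, ?_⟩
      rw [hd, he, pow_succ]
      ring
    set c := x + 2 ^ v with hc
    have hcd : 2 ^ (v + 1) ∣ c := by
      obtain ⟨e, he⟩ : ∃ e, d + 1 = 2 * e := by
        rcases Nat.even_or_odd d with ⟨e, he⟩ | ⟨e, he⟩
        · exact absurd ⟨e, by omega⟩ hdodd
        · exact ⟨e + 1, by omega⟩
      refine ⟨e, ?_⟩
      rw [hc, hd, pow_succ]
      calc 2 ^ v * d + 2 ^ v = 2 ^ v * (d + 1) := by ring
        _ = 2 ^ v * (2 * e) := by rw [he]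
        _ = 2 ^ v * 2 * e := by ring
    have hxyge : x + 2 ^ v ≤ y := by
      have hdvd : 2 ^ v ∣ y - x := Nat.dvd_sub hdy hdx
      have : 2 ^ v ≤ y - x := Nat.le_of_dvd (by omega) hdvd
      omega
    have hcs : c ∈ s := by
      rw [hs, Finset.mem_Ioc]
      have hxa := (hmem x hxs).1
      have hyb := (hmem y hys).2
      constructor
      · have : 0 < 2 ^ v := Nat.two_pow_pos v
        omega
      · omega
    have hc0 : c ≠ 0 := by have := hposmem c hcs; omega
    have hvc : v + 1 ≤ padicValNat 2 c := (padicValNat_dvd_iff_le hc0).mp hcd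
    have := Finset.le_sup (f := padicValNat 2) hcs
    rw [hi₀] at this
    omega
  have huniq : ∀ i ∈ s, i ≠ i₀ → padicValNat 2 i < v := by
    intro i his hnei
    have hle : padicValNat 2 i ≤ v := by
      have := Finset.le_sup (f := padicValNat 2) his
      rw [hi₀] at this
      exact this
    rcases lt_or_eq_of_le hle with h | h
    · exact h
    · exfalso
      rcases Nat.lt_or_ge i i₀ with hlt | hge
      · exact key i i₀ his hi₀s hlt h rfl
      · exact key i₀ i hi₀s his (by omega) rfl h
  -- valuation of individual terms
  have hval : ∀ i ∈ s, g i / i ≠ 0 ∧ padicValRat 2 (g i / i) = -(padicValNat 2 i : ℤ) := by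
    intro i his
    have hi1 : 1 ≤ i := hposmem i his
    have hiQ : (i : ℚ) ≠ 0 := by positivity
    have hbase : ((i : ℚ))⁻¹ ≠ 0 ∧ padicValRat 2 ((i : ℚ))⁻¹ = -(padicValNat 2 i : ℤ) := by
      constructor
      · exact inv_ne_zero hiQ
      · rw [padicValRat.inv, padicValRat.of_nat]
    rcases hg i with h | h
    · rw [h, one_div]
      exact hbase
    · rw [h]
      constructor
      · intro hz
        apply hbase.1
        have : -((i:ℚ))⁻¹ = 0 := by rw [← hz]; ring
        linarith [this]
      · rw [show (-1 : ℚ) / i = -((i:ℚ))⁻¹ by ring, padicValRat.neg]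
        exact hbase.2
  -- split off the maximal term
  have hsplit : g i₀ / i₀ + ∑ i ∈ s.erase i₀, g i / i = ∑ i ∈ s, g i / i :=
    Finset.add_sum_erase s (fun i => g i / (i : ℚ)) hi₀s
  have hrest : ∑ i ∈ s.erase i₀, g i / i = -(g i₀ / i₀) := by
    rw [h0] at hsplit
    linarith
  have hrestval := val_sum_ge (-(v : ℤ) + 1) (s.erase i₀) (fun i => g i / i) (by
    intro i hi
    have his := Finset.mem_of_mem_erase hi
    have hnei := Finset.ne_of_mem_erase hi
    have h1 := hval i his
    have h2 := huniq i his hnei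
    refine ⟨h1.1, ?_⟩
    rw [h1.2]
    omega)
  have hterm := hval i₀ hi₀s
  rcases hrestval with hz | ⟨_, hge⟩
  · rw [hz] at hrest
    exact hterm.1 (by linarith [hrest])
  · rw [hrest, padicValRat.neg, hterm.2] at hge
    omega

open scoped Classical in
/-- rational mirror of the greedy sums -/
noncomputable def gq (τ : ℝ) : ℕ → ℚ
  | 0 => 0
  | n + 1 => gq τ n + (if gSigma τ n ≤ τ then 1 else -1) / (n + 1)

lemma gq_cast (τ : ℝ) (n : ℕ) : ((gq τ n : ℚ) : ℝ) = gSigma τ n := by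
  induction n with
  | zero => simp [gq, gSigma]
  | succ i ih =>
    have hrec : gq τ (i + 1) = gq τ i + (if gSigma τ i ≤ τ then 1 else -1) / (i + 1) := by
      rw [gq]
    have hrec2 : gSigma τ (i + 1)
        = gSigma τ i + (if gSigma τ i ≤ τ then (1:ℝ) else -1) / (i + 1) := rfl
    rw [hrec, hrec2, ← ih]
    push_cast
    split_ifs <;> push_cast <;> ring

lemma gq_telescope (τ : ℝ) {a b : ℕ} (hab : a ≤ b) :
    gq τ b - gq τ a =
      ∑ i ∈ Finset.Ioc a b, (if gSigma τ (i - 1) ≤ τ then (1:ℚ) else -1) / i := by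
  induction b with
  | zero =>
    have : a = 0 := by omega
    subst this
    simp
  | succ n ih =>
    rcases Nat.lt_or_ge n a with h' | h'
    · have : a = n + 1 := by omega
      subst this
      simp
    · have ihh := ih h'
      rw [Finset.sum_Ioc_succ_top h', ← ihh]
      have hrec : gq τ (n + 1) = gq τ n + (if gSigma τ n ≤ τ then 1 else -1) / (n + 1) := by
        rw [gq]
      rw [hrec]
      have he : (n + 1 : ℕ) - 1 = n := by omega
      rw [he]
      push_cast
      ring

lemma gSigma_inj (τ : ℝ) {a b : ℕ} (hab : a < b) : gSigma τ a ≠ gSigma τ b := by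
  intro heq
  have hq : gq τ a = gq τ b := by
    have h1 : ((gq τ a : ℚ) : ℝ) = ((gq τ b : ℚ) : ℝ) := by
      rw [gq_cast, gq_cast, heq]
    exact_mod_cast h1
  have htel := gq_telescope τ (le_of_lt hab)
  rw [← hq, sub_self] at htel
  exact signed_harmonic_ne_zero hab _ (fun i => by split_ifs <;> simp) htel.symm

end Aux13

noncomputable def cConst' := cConst


/-- Corollary 2 of the paper: for `τ ∉ Y_k` there are infinitely many
`n` with `0 < (σ_n(τ) - τ) n^{k+1} < c_k`, and infinitely many `n` with
`0 < (τ - σ_n(τ)) n^{k+1} < c_k`. -/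
theorem stmt_13 (k : ℕ) (τ : ℝ) (hτ : τ ∉ Yset k) :
    (∀ N : ℕ, ∃ n : ℕ, N ≤ n ∧ 0 < n ∧
      0 < (gSigma τ n - τ) * (n : ℝ) ^ (k + 1) ∧
      (gSigma τ n - τ) * (n : ℝ) ^ (k + 1) < cConst k) ∧
    (∀ N : ℕ, ∃ n : ℕ, N ≤ n ∧ 0 < n ∧
      0 < (τ - gSigma τ n) * (n : ℝ) ^ (k + 1) ∧
      (τ - gSigma τ n) * (n : ℝ) ^ (k + 1) < cConst k) := by
  classical
  have hX : ∀ h, 1 ≤ h → h ≤ k → τ ∉ Xset h := by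
    intro h h1 h2 hc
    apply hτ
    unfold Yset
    exact Set.mem_biUnion (Finset.mem_Icc.mpr ⟨h1, h2⟩) hc
  obtain ⟨G1, G2⟩ := Aux13.good_all τ k hX
  obtain ⟨M, hM⟩ : ∃ M : ℕ, ∀ t, M ≤ t → Aux13.del τ t ≠ 0 := by
    by_cases h : ∃ n, Aux13.del τ n = 0
    · obtain ⟨n₀, hn₀⟩ := h
      refine ⟨n₀ + 1, fun t ht hc => ?_⟩
      have heq : gSigma τ n₀ = gSigma τ t := by
        unfold Aux13.del at hn₀ hc
        linarith
      exact Aux13.gSigma_inj τ (show n₀ < t by omega) heq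
    · push_neg at h
      exact ⟨0, fun t _ => h t⟩
  have main : ∀ t : ℕ, 1 ≤ t →
      Aux13.av k (t + 1) * (t : ℝ) ^ (k + 1) < cConst k := by
    intro t ht1
    have htR : (1:ℝ) ≤ (t:ℝ) := by exact_mod_cast ht1
    have htpow : (0:ℝ) < (t:ℝ) ^ (k + 1) := by positivity
    have hub := Aux13.av_ub (m := k) (p := t + 1) (by omega)
    have hB : (0:ℝ) < ((t + 1 : ℕ) : ℝ) ^ (k + 1) := by positivity
    have h6 : cConst k / ((t + 1 : ℕ) : ℝ) ^ (k + 1) * (t : ℝ) ^ (k + 1) < cConst k := by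
      rw [div_mul_eq_mul_div, div_lt_iff₀ hB]
      have hltp : (t:ℝ) ^ (k + 1) < ((t + 1 : ℕ) : ℝ) ^ (k + 1) := by
        apply pow_lt_pow_left₀ _ (by positivity) (by omega)
        push_cast
        linarith
      exact mul_lt_mul_of_pos_left hltp (Aux13.cConst_pos k)
    have h5 : Aux13.av k (t + 1) * (t : ℝ) ^ (k + 1)
        ≤ cConst k / ((t + 1 : ℕ) : ℝ) ^ (k + 1) * (t : ℝ) ^ (k + 1) :=
      mul_le_mul_of_nonneg_right hub (le_of_lt htpow)
    linarith
  constructor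
  · intro N
    obtain ⟨t, ht1, ht2, ht3⟩ := G1 (max N 1)
    have ht1' : 1 ≤ t := le_trans (le_max_right _ _) ht1
    have htpow : (0:ℝ) < (t:ℝ) ^ (k + 1) := by
      have : (1:ℝ) ≤ (t:ℝ) := by exact_mod_cast ht1'
      positivity
    refine ⟨t, le_trans (le_max_left _ _) ht1, by omega, ?_, ?_⟩
    · exact mul_pos ht2 htpow
    · have h5 : (gSigma τ t - τ) * (t : ℝ) ^ (k + 1)
          ≤ Aux13.av k (t + 1) * (t : ℝ) ^ (k + 1) :=
        mul_le_mul_of_nonneg_right ht3 (le_of_lt htpow)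
      exact lt_of_le_of_lt h5 (main t ht1')
  · intro N
    obtain ⟨t, ht1, ht2, ht3⟩ := G2 (max (max N 1) M)
    have ht1' : 1 ≤ t := le_trans (le_trans (le_max_right N 1) (le_max_left _ _)) ht1
    have htM : M ≤ t := le_trans (le_max_right _ _) ht1
    have htpow : (0:ℝ) < (t:ℝ) ^ (k + 1) := by
      have : (1:ℝ) ≤ (t:ℝ) := by exact_mod_cast ht1'
      positivity
    have hne := hM t htM
    have hdelneg : Aux13.del τ t < 0 := lt_of_le_of_ne ht3 hne
    refine ⟨t, le_trans (le_trans (le_max_left N 1) (le_max_left _ _)) ht1, by omega, ?_, ?_⟩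
    · have : 0 < τ - gSigma τ t := by
        unfold Aux13.del at hdelneg
        linarith
      exact mul_pos this htpow
    · have hlt : τ - gSigma τ t < Aux13.av k (t + 1) := by
        unfold Aux13.del at ht2
        linarith
      have h5 : (τ - gSigma τ t) * (t : ℝ) ^ (k + 1)
          < Aux13.av k (t + 1) * (t : ℝ) ^ (k + 1) :=
        mul_lt_mul_of_pos_right hlt htpow
      exact lt_trans h5 (main t ht1')
end

section
/- Let k ≥ 1 and let m be an integer. Then U_{k,m} = ∑_{a odd, 1 ≤ a ≤ 2^k − 1} c(a)·e^{2πi a m/2^k}·log(1 − e^{2πi a/2^k}), where c(a) := i^k · e^{πi a/2^k} · ∏_{j=1}^{k} sin(π a/2^j) and log is the principal branch of the complex logarithm. -/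
open Filter Complex

/-- `fPerInt k` is the `2^k`-periodic function on `ℤ` with `fPerInt k n = ε_n`
for `0 ≤ n < 2^k`. -/
noncomputable def fPerInt (k : ℕ) (n : ℤ) : ℝ := tmSign (n % (2 ^ k : ℤ)).toNat

/-- `U_{k,m} = ∑_{n=1}^∞ f_k(n+m)/n` (limit of partial sums). -/
noncomputable def Uconst (k : ℕ) (m : ℤ) : ℝ :=
  limUnder atTop (fun N : ℕ => ∑ n ∈ Finset.Icc 1 N, fPerInt k ((n : ℤ) + m) / (n : ℝ))

open Finset Real Topology

section Aux

lemma tmSign_two_mul (n : ℕ) : tmSign (2 * n) = tmSign n := by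
  rcases Nat.eq_zero_or_pos n with rfl | hn
  · simp
  · unfold tmSign
    rw [Nat.digits_def' (by norm_num) (by omega)]
    simp [Nat.mul_div_cancel_left _ (by norm_num : 0 < 2), Nat.mul_mod_right]

lemma tmSign_two_mul_add_one (n : ℕ) : tmSign (2 * n + 1) = - tmSign n := by
  unfold tmSign
  rw [Nat.digits_def' (by norm_num) (by omega)]
  have h1 : (2 * n + 1) % 2 = 1 := by omega
  have h2 : (2 * n + 1) / 2 = n := by omega
  rw [h1, h2]
  simp [pow_succ, List.sum_cons, pow_add, mul_comm]

lemma sum_range_two_mul {M : Type*} [AddCommMonoid M] (g : ℕ → M) (m : ℕ) :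
    ∑ n ∈ Finset.range (2 * m), g n = ∑ i ∈ Finset.range m, (g (2*i) + g (2*i+1)) := by
  induction m with
  | zero => simp
  | succ m ih =>
      have : 2 * (m + 1) = (2 * m + 1) + 1 := by ring
      rw [this, Finset.sum_range_succ, Finset.sum_range_succ, ih, Finset.sum_range_succ]
      abel

lemma tm_prod (k : ℕ) (z : ℂ) :
    ∑ n ∈ Finset.range (2^k), (tmSign n : ℂ) * z ^ n
      = ∏ j ∈ Finset.range k, (1 - z ^ (2^j)) := by
  induction k generalizing z with
  | zero => simp [tmSign]
  | succ k ih =>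
      have h2 : (2:ℕ)^(k+1) = 2 * 2^k := by ring
      rw [h2, sum_range_two_mul]
      have : ∀ i : ℕ, (tmSign (2*i) : ℂ) * z ^ (2*i) + (tmSign (2*i+1) : ℂ) * z ^ (2*i+1)
          = (1 - z) * ((tmSign i : ℂ) * (z^2) ^ i) := by
        intro i
        rw [tmSign_two_mul, tmSign_two_mul_add_one]
        push_cast
        rw [pow_mul]
        ring
      rw [Finset.sum_congr rfl fun i _ => this i, ← Finset.mul_sum, ih,
        Finset.prod_range_succ']
      rw [pow_zero, pow_one, mul_comm]
      congr 1
      exact Finset.prod_congr rfl fun j _ => by rw [← pow_mul, pow_succ, mul_comm (2^j) 2]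

lemma sum_exp_int (N : ℕ) (hN : 0 < N) (r : ℤ) :
    ∑ a ∈ Finset.range N, Complex.exp (2 * (π:ℂ) * I * a * r / N) =
      if (N:ℤ) ∣ r then (N:ℂ) else 0 := by
  set ζ : ℂ := Complex.exp (2 * (π:ℂ) * I * r / N) with hζ
  have hterm : ∀ a : ℕ, Complex.exp (2 * (π:ℂ) * I * a * r / N) = ζ ^ a := by
    intro a
    rw [hζ, ← Complex.exp_nat_mul]
    ring_nf
  rw [Finset.sum_congr rfl fun a _ => hterm a]
  have hNC : (N:ℂ) ≠ 0 := Nat.cast_ne_zero.mpr hN.ne'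
  by_cases hdvd : (N:ℤ) ∣ r
  · obtain ⟨t, rfl⟩ := hdvd
    have : ζ = 1 := by
      rw [hζ]
      have : 2 * (π:ℂ) * I * ((N:ℤ) * t : ℤ) / N = (t:ℂ) * (2 * π * I) := by
        push_cast
        field_simp
      rw [this, Complex.exp_int_mul_two_pi_mul_I]
    rw [if_pos (Dvd.intro t rfl)]
    simp [this]
  · have hζ1 : ζ ≠ 1 := by
      intro h
      rw [hζ, Complex.exp_eq_one_iff] at h
      obtain ⟨t, ht⟩ := h
      apply hdvd
      refine ⟨t, ?_⟩
      have hπ : (π:ℂ) ≠ 0 := Complex.ofReal_ne_zero.mpr Real.pi_ne_zero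
      have hI : I ≠ 0 := Complex.I_ne_zero
      field_simp at ht
      have : (r:ℂ) = (N:ℂ) * t := by
        have h2 : (2:ℂ) ≠ 0 := two_ne_zero
        apply mul_left_cancel₀ (mul_ne_zero (mul_ne_zero h2 hπ) hI)
        linear_combination (2 * (π:ℂ) * I) * ht
      exact_mod_cast this
    rw [geom_sum_eq hζ1]
    have hζN : ζ ^ N = 1 := by
      rw [hζ, ← Complex.exp_nat_mul]
      have : (N:ℂ) * (2 * (π:ℂ) * I * r / N) = (r:ℂ) * (2 * π * I) := by
        field_simp
      rw [this]
      exact_mod_cast Complex.exp_int_mul_two_pi_mul_I r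
    rw [hζN]
    simp [hdvd]

lemma fourier_expansion (k : ℕ) (n : ℤ) :
    (2^k : ℂ) * (fPerInt k n : ℂ)
      = ∑ a ∈ Finset.range (2^k),
          (∑ p ∈ Finset.range (2^k), (tmSign p : ℂ)
              * Complex.exp (-(2 * (π:ℂ) * I * a * p / 2^k)))
            * Complex.exp (2 * (π:ℂ) * I * a * n / 2^k) := by
  have hN : (0:ℕ) < 2^k := pow_pos (by norm_num) k
  have hcast : ((2^k : ℕ) : ℂ) = (2:ℂ)^k := by push_cast; ring_nf
  have step1 : ∀ a p : ℕ,
      (tmSign p : ℂ) * Complex.exp (-(2 * (π:ℂ) * I * a * p / 2^k))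
          * Complex.exp (2 * (π:ℂ) * I * a * n / 2^k)
        = (tmSign p : ℂ) * Complex.exp (2 * (π:ℂ) * I * a * ((n - p : ℤ):ℂ) / ((2^k:ℕ):ℂ)) := by
    intro a p
    rw [mul_assoc, ← Complex.exp_add, hcast]
    congr 1
    push_cast
    ring
  simp_rw [Finset.sum_mul]
  rw [Finset.sum_congr rfl fun a _ => Finset.sum_congr rfl fun p _ => step1 a p,
    Finset.sum_comm]
  have step2 : ∀ p : ℕ,
      ∑ a ∈ Finset.range (2^k),
        (tmSign p : ℂ) * Complex.exp (2 * (π:ℂ) * I * a * ((n - p : ℤ):ℂ) / ((2^k:ℕ):ℂ))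
      = (tmSign p : ℂ) * (if ((2^k:ℕ):ℤ) ∣ (n - p) then ((2^k:ℕ):ℂ) else 0) := by
    intro p
    rw [← Finset.mul_sum, sum_exp_int _ hN (n - p)]
  rw [Finset.sum_congr rfl fun p _ => step2 p]
  set N : ℕ := 2^k with hNdef
  set n₀ : ℕ := (n % (N : ℤ)).toNat with hn₀
  have hmodnn : (0:ℤ) ≤ n % N := Int.emod_nonneg n (by exact_mod_cast hN.ne')
  have hmodlt : n % (N:ℤ) < N := Int.emod_lt_of_pos n (by exact_mod_cast hN)
  have hn₀cast : (n₀ : ℤ) = n % N := Int.toNat_of_nonneg hmodnn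
  have hmem : n₀ ∈ Finset.range N := by
    rw [Finset.mem_range]
    omega
  rw [Finset.sum_eq_single_of_mem n₀ hmem]
  · rw [if_pos]
    · have : fPerInt k n = tmSign n₀ := by rw [fPerInt, hn₀, hNdef]; norm_cast
      rw [this, hcast]
      ring
    · refine ⟨n / N, ?_⟩
      have := Int.mul_ediv_add_emod n (N:ℤ)
      omega
  · intro p hp hne
    rw [if_neg, mul_zero]
    intro hdvd
    apply hne
    have hplt : p < N := Finset.mem_range.mp hp
    have h1 : (p:ℤ) % N = n % N := (Int.modEq_iff_dvd).mpr hdvd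
    have h2 : (p:ℤ) % N = p := Int.emod_eq_of_lt (by positivity) (by exact_mod_cast hplt)
    omega

lemma one_sub_exp (w : ℂ) :
    1 - Complex.exp (-(2 * w * I)) = 2 * I * Complex.exp (-w * I) * Complex.sin w := by
  have hI := Complex.I_sq
  rw [Complex.sin]
  set x := Complex.exp (-w*I) with hx
  set y := Complex.exp (w*I) with hy
  have hxx : Complex.exp (-(2*w*I)) = x * x := by rw [hx, ← Complex.exp_add]; ring_nf
  have hxy : x * y = 1 := by rw [hx, hy, ← Complex.exp_add]; simp
  rw [hxx]
  linear_combination (-(x*(x-y))) * hI - hxy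

lemma F_even (k : ℕ) (hk : 1 ≤ k) (a : ℕ) (ha : ¬ Odd a) :
    ∑ p ∈ Finset.range (2^k), (tmSign p : ℂ)
        * Complex.exp (-(2 * (π:ℂ) * I * a * p / 2^k)) = 0 := by
  have hz : ∀ p : ℕ, Complex.exp (-(2 * (π:ℂ) * I * a * p / 2^k))
      = (Complex.exp (-(2 * (π:ℂ) * I * a / 2^k))) ^ p := by
    intro p
    rw [← Complex.exp_nat_mul]
    ring_nf
  simp_rw [hz]
  rw [tm_prod]
  apply Finset.prod_eq_zero (Finset.mem_range.mpr (by omega : k - 1 < k))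
  rw [← Complex.exp_nat_mul]
  have hne : (2:ℂ)^k ≠ 0 := pow_ne_zero _ two_ne_zero
  have harg : ((2^(k-1):ℕ):ℂ) * (-(2 * (π:ℂ) * I * a / 2^k)) = -((π:ℂ) * I * a) := by
    push_cast
    have : (2:ℂ)^(k-1) * 2 = 2^k := by
      rw [← pow_succ]
      congr 1
      omega
    field_simp
    linear_combination (-(a:ℂ)) * this
  rw [harg]
  obtain ⟨b, rfl⟩ := Nat.not_odd_iff_even.mp ha
  have : -((π:ℂ) * I * ((b+b:ℕ):ℂ)) = (-b : ℤ) * (2 * π * I) := by push_cast; ring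
  rw [this, Complex.exp_int_mul_two_pi_mul_I]
  simp

lemma F_odd (k : ℕ) (hk : 1 ≤ k) (a : ℕ) (ha : Odd a) :
    ∑ p ∈ Finset.range (2^k), (tmSign p : ℂ)
        * Complex.exp (-(2 * (π:ℂ) * I * a * p / 2^k))
      = -((2:ℂ)^k) * (I ^ k * Complex.exp ((π:ℂ) * I * (a:ℂ) / 2 ^ k) *
          ∏ j ∈ Finset.Icc 1 k, Complex.sin ((π:ℂ) * (a:ℂ) / 2 ^ j)) := by
  have hne : (2:ℂ)^k ≠ 0 := pow_ne_zero _ two_ne_zero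
  have hz : ∀ p : ℕ, Complex.exp (-(2 * (π:ℂ) * I * a * p / 2^k))
      = (Complex.exp (-(2 * (π:ℂ) * I * a / 2^k))) ^ p := by
    intro p; rw [← Complex.exp_nat_mul]; ring_nf
  simp_rw [hz]
  rw [tm_prod]
  have hfac : ∀ j ∈ Finset.range k,
      1 - (Complex.exp (-(2 * (π:ℂ) * I * a / 2^k))) ^ (2^j)
        = 2 * I * Complex.exp (-((π:ℂ) * a * 2^j / 2^k) * I)
            * Complex.sin ((π:ℂ) * a * 2^j / 2^k) := by
    intro j _
    rw [← Complex.exp_nat_mul]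
    rw [← one_sub_exp ((π:ℂ) * a * 2^j / 2^k)]
    congr 1
    push_cast
    ring
  rw [Finset.prod_congr rfl hfac]
  rw [Finset.prod_mul_distrib, Finset.prod_mul_distrib, Finset.prod_const,
    ← Complex.exp_sum]
  have hsum : ∑ j ∈ Finset.range k, -((π:ℂ) * a * 2^j / 2^k) * I
      = -((π:ℂ) * a * I) + (π:ℂ) * I * a / 2^k := by
    have hg : ∑ j ∈ Finset.range k, ((2:ℂ))^j = 2^k - 1 := by
      rw [geom_sum_eq (by norm_num)]
      norm_num
    have hterm : ∀ j ∈ Finset.range k, -((π:ℂ) * a * 2^j / 2^k) * I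
        = (-((π:ℂ) * a / 2^k) * I) * 2^j := fun j _ => by ring
    rw [Finset.sum_congr rfl hterm, ← Finset.mul_sum, hg]
    field_simp
    ring
  rw [hsum, Complex.exp_add]
  have hexpa : Complex.exp (-((π:ℂ) * a * I)) = -1 := by
    have : -((π:ℂ) * a * I) = (a:ℂ) * (-((π:ℂ) * I)) := by ring
    rw [this, Complex.exp_nat_mul]
    have : Complex.exp (-((π:ℂ) * I)) = -1 := by
      rw [Complex.exp_neg ((π:ℂ) * I), Complex.exp_pi_mul_I]
      norm_num
    rw [this]
    exact ha.neg_one_pow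
  rw [hexpa]
  have hsin : ∏ j ∈ Finset.range k, Complex.sin ((π:ℂ) * a * 2^j / 2^k)
      = ∏ j ∈ Finset.Icc 1 k, Complex.sin ((π:ℂ) * (a:ℂ) / 2 ^ j) := by
    have h1 : Finset.Icc 1 k = Finset.Ico 1 (k+1) := by
      rw [Finset.Ico_add_one_right_eq_Icc]
    rw [h1, Finset.prod_Ico_eq_prod_range]
    simp only [Nat.add_sub_cancel]
    have h2 := Finset.prod_range_reflect
      (fun i => Complex.sin ((π:ℂ) * (a:ℂ) / 2 ^ (1 + i))) k
    rw [← h2]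
    apply Finset.prod_congr rfl
    intro j hj
    have hjk : j < k := Finset.mem_range.mp hj
    have harg : (π:ℂ) * a * 2^j / 2^k = (π:ℂ) * (a:ℂ) / 2 ^ (1 + (k - 1 - j)) := by
      have hkj : 1 + (k - 1 - j) = k - j := by omega
      rw [hkj]
      have hpow : (2:ℂ)^(k-j) * 2^j = 2^k := by
        rw [← pow_add]
        congr 1
        omega
      have hne2 : (2:ℂ)^(k-j) ≠ 0 := pow_ne_zero _ two_ne_zero
      field_simp
      linear_combination (a:ℂ) * hpow
    rw [harg]
  rw [hsin]
  rw [mul_pow]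
  simp only [Finset.card_range]
  ring

/-- The Fourier expansion of `fPerInt` over odd frequencies. -/
lemma fourier_odd (k : ℕ) (hk : 1 ≤ k) (n : ℤ) :
    (fPerInt k n : ℂ)
      = ∑ a ∈ (Finset.range (2^k)).filter (fun a => Odd a),
          (-(I ^ k * Complex.exp ((π:ℂ) * I * (a:ℂ) / 2 ^ k) *
              ∏ j ∈ Finset.Icc 1 k, Complex.sin ((π:ℂ) * (a:ℂ) / 2 ^ j)))
            * Complex.exp (2 * (π:ℂ) * I * a * n / 2^k) := by
  have hne : (2:ℂ)^k ≠ 0 := pow_ne_zero _ two_ne_zero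
  apply mul_left_cancel₀ hne
  rw [fourier_expansion k n]
  rw [← Finset.sum_filter_add_sum_filter_not (Finset.range (2^k)) (fun a => Odd a)]
  have heven : ∑ a ∈ (Finset.range (2^k)).filter (fun a => ¬ Odd a),
      (∑ p ∈ Finset.range (2^k), (tmSign p : ℂ)
          * Complex.exp (-(2 * (π:ℂ) * I * a * p / 2^k)))
        * Complex.exp (2 * (π:ℂ) * I * a * n / 2^k) = 0 := by
    apply Finset.sum_eq_zero
    intro a ha
    rw [F_even k hk a (Finset.mem_filter.mp ha).2, zero_mul]
  rw [heven, add_zero, Finset.mul_sum]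
  apply Finset.sum_congr rfl
  intro a ha
  rw [F_odd k hk a (Finset.mem_filter.mp ha).2]
  ring

end Aux

lemma tendsto_log_series {z : ℂ} (hz : ‖z‖ = 1) (hz1 : z ≠ 1) :
    Tendsto (fun N : ℕ => ∑ n ∈ Finset.range N, z ^ n / n) atTop
      (𝓝 (-Complex.log (1 - z))) := by
  set f : ℕ → ℂ := fun n => z ^ n / n with hf
  have hz1' : z - 1 ≠ 0 := sub_ne_zero.mpr hz1
  have habs1 : (0:ℝ) < ‖z - 1‖ := norm_pos_iff.mpr hz1'
  have hQcauchy : CauchySeq (fun N : ℕ => ∑ i ∈ Finset.range N, ((i:ℝ)+1)⁻¹ • z^(i+1)) := by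
    apply Antitone.cauchySeq_series_mul_of_tendsto_zero_of_bounded
      (b := 2 / ‖z - 1‖)
    · intro i j hij
      have h1 : (0:ℝ) < (i:ℝ) + 1 := by positivity
      exact inv_anti₀ h1 (by exact_mod_cast Nat.add_le_add_right hij 1)
    · have : Tendsto (fun n : ℕ => 1 / ((n:ℝ) + 1)) atTop (𝓝 0) :=
        tendsto_one_div_add_atTop_nhds_zero_nat
      simpa [one_div] using this
    · intro n
      have hsum : ∑ i ∈ Finset.range n, z^(i+1) = z * ((z^n - 1)/(z - 1)) := by
        rw [← geom_sum_eq hz1, Finset.mul_sum]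
        exact Finset.sum_congr rfl fun i _ => by ring
      rw [hsum]
      have heq : ‖z * ((z^n - 1)/(z - 1))‖ = ‖z^n - 1‖ / ‖z - 1‖ := by
        simp [norm_mul, norm_div, hz]
      rw [heq]
      have hb : ‖z^n - 1‖ ≤ 2 := by
        calc ‖z^n - 1‖ ≤ ‖z^n‖ + ‖(1:ℂ)‖ :=
              norm_sub_le _ _
        _ = 2 := by rw [norm_pow, hz, norm_one]; norm_num
      gcongr
  obtain ⟨l, hl⟩ := cauchySeq_tendsto_of_complete hQcauchy
  have hP : Tendsto (fun N : ℕ => ∑ i ∈ Finset.range N, f i) atTop (𝓝 l) := by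
    rw [← tendsto_add_atTop_iff_nat 1]
    have heq : ∀ N : ℕ, ∑ i ∈ Finset.range (N+1), f i
        = ∑ i ∈ Finset.range N, ((i:ℝ)+1)⁻¹ • z^(i+1) := by
      intro N
      rw [Finset.sum_range_succ']
      have hf0 : f 0 = 0 := by simp [hf]
      rw [hf0, add_zero]
      refine Finset.sum_congr rfl fun i _ => ?_
      simp only [hf, Complex.real_smul]
      push_cast
      ring
    exact (Filter.tendsto_congr heq).mpr hl
  have abel := Complex.tendsto_tsum_powerSeries_nhdsWithin_lt hP
  rw [tendsto_map'_iff] at abel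
  have habel : Tendsto (fun x : ℝ => -Complex.log (1 - (x:ℂ) * z)) (𝓝[<] (1:ℝ)) (𝓝 l) := by
    apply abel.congr'
    filter_upwards [Ioo_mem_nhdsLT_of_mem (by norm_num : (1:ℝ) ∈ Set.Ioc (-1:ℝ) 1)] with x hx
    have hxz : ‖(x:ℂ) * z‖ < 1 := by
      rw [norm_mul, Complex.norm_real, hz, mul_one, Real.norm_eq_abs]
      rw [abs_lt]
      exact ⟨hx.1, hx.2⟩
    have hs := Complex.hasSum_taylorSeries_neg_log hxz
    rw [Function.comp_apply, ← hs.tsum_eq]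
    apply tsum_congr
    intro n
    simp only [hf]
    rw [mul_pow]
    ring
  have hrelt : z.re < 1 := by
    rcases lt_or_eq_of_le (Complex.re_le_norm z) with h | h
    · rwa [hz] at h
    · exfalso
      apply hz1
      have him : z.im = 0 := by
        have h2 : ‖z‖ ^ 2 = z.re ^ 2 + z.im ^ 2 := by
          rw [Complex.sq_norm, Complex.normSq_apply]; ring
        rw [hz] at h2
        nlinarith [sq_nonneg z.im]
      have hre : z.re = 1 := by rw [← hz, ← h]
      exact Complex.ext hre (by simp [him])
  have hcont : Tendsto (fun x : ℝ => -Complex.log (1 - (x:ℂ) * z)) (𝓝[<] (1:ℝ))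
      (𝓝 (-Complex.log (1 - z))) := by
    have t1 : Tendsto (fun x : ℝ => 1 - (x:ℂ) * z) (𝓝 1) (𝓝 (1 - z)) := by
      have hcts : Continuous (fun x : ℝ => 1 - (x:ℂ) * z) := by fun_prop
      have h := hcts.tendsto 1
      simpa using h
    have t2 : Tendsto Complex.log (𝓝 (1 - z)) (𝓝 (Complex.log (1 - z))) := by
      apply (continuousAt_clog ?_).tendsto
      left
      simp only [Complex.sub_re, Complex.one_re]
      linarith
    exact ((t2.comp t1).neg).mono_left nhdsWithin_le_nhds
  have : l = -Complex.log (1 - z) := tendsto_nhds_unique habel hcont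
  rwa [this] at hP

/-- Proposition 3 of the paper: for `k ≥ 1` and `m ∈ ℤ`,
`U_{k,m} = ∑_{a odd, 1 ≤ a ≤ 2^k-1} c(a) e^{2πiam/2^k} log(1 - e^{2πia/2^k})`, with
`c(a) = i^k e^{πia/2^k} ∏_{j=1}^k sin(πa/2^j)` and `log` the principal branch. -/
theorem stmt_15 (k : ℕ) (hk : 1 ≤ k) (m : ℤ) :
    (Uconst k m : ℂ)
      = ∑ a ∈ (Finset.range (2 ^ k)).filter (fun a => Odd a),
          (I ^ k * Complex.exp ((Real.pi : ℂ) * I * (a : ℂ) / 2 ^ k) *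
              ∏ j ∈ Finset.Icc 1 k, Complex.sin ((Real.pi : ℂ) * (a : ℂ) / 2 ^ j)) *
            Complex.exp (2 * (Real.pi : ℂ) * I * (a : ℂ) * (m : ℂ) / 2 ^ k) *
            Complex.log (1 - Complex.exp (2 * (Real.pi : ℂ) * I * (a : ℂ) / 2 ^ k)) := by
  classical
  set Ω : Finset ℕ := (Finset.range (2^k)).filter (fun a => Odd a) with hΩ
  set z : ℕ → ℂ := fun a => Complex.exp (2 * (π:ℂ) * I * (a:ℂ) / 2 ^ k) with hzdef
  set c : ℕ → ℂ := fun a => I ^ k * Complex.exp ((π:ℂ) * I * (a:ℂ) / 2 ^ k) *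
      ∏ j ∈ Finset.Icc 1 k, Complex.sin ((π:ℂ) * (a:ℂ) / 2 ^ j) with hcdef
  set E : ℕ → ℂ := fun a => Complex.exp (2 * (π:ℂ) * I * (a:ℂ) * (m:ℂ) / 2 ^ k) with hEdef
  have hΩprop : ∀ a ∈ Ω, Odd a ∧ a < 2^k := by
    intro a ha
    rw [hΩ, Finset.mem_filter, Finset.mem_range] at ha
    exact ⟨ha.2, ha.1⟩
  -- properties of z a
  have hzabs : ∀ a ∈ Ω, ‖z a‖ = 1 := by
    intro a _
    show ‖Complex.exp (2 * (π:ℂ) * I * (a:ℂ) / 2 ^ k)‖ = 1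
    have : 2 * (π:ℂ) * I * (a:ℂ) / 2 ^ k = ((2 * π * a / 2^k : ℝ) : ℂ) * I := by
      push_cast
      ring
    rw [this, Complex.norm_exp_ofReal_mul_I]
  have hzne1 : ∀ a ∈ Ω, z a ≠ 1 := by
    intro a ha h1
    obtain ⟨hodd, hlt⟩ := hΩprop a ha
    have hapos : 0 < a := by
      rcases Nat.eq_zero_or_pos a with rfl | h
      · exact absurd hodd (by simp)
      · exact h
    have h1' : Complex.exp (2 * (π:ℂ) * I * (a:ℂ) / 2 ^ k) = 1 := h1
    rw [Complex.exp_eq_one_iff] at h1'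
    obtain ⟨t, ht⟩ := h1'
    have hπ : (π:ℂ) ≠ 0 := Complex.ofReal_ne_zero.mpr Real.pi_ne_zero
    have hne : (2:ℂ)^k ≠ 0 := pow_ne_zero _ two_ne_zero
    have hac : (a:ℂ) = (t:ℂ) * (2^k : ℂ) := by
      have h2 : (2:ℂ) ≠ 0 := two_ne_zero
      apply mul_left_cancel₀ (mul_ne_zero (mul_ne_zero h2 hπ) Complex.I_ne_zero)
      field_simp at ht
      linear_combination (2 * (π:ℂ) * I) * ht
    have haz : (a:ℤ) = t * 2^k := by exact_mod_cast hac
    have h2k : (0:ℤ) < 2^k := by positivity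
    rcases le_or_gt t 0 with h | h
    · nlinarith [haz, h2k, (by exact_mod_cast hapos : (0:ℤ) < (a:ℤ))]
    · have : (1:ℤ) ≤ t := h
      have : (2:ℤ)^k ≤ (a:ℤ) := by nlinarith
      have : (2:ℕ)^k ≤ a := by exact_mod_cast this
      omega
  -- per-term limits over Icc sums
  have hIcc : ∀ (w : ℂ) (N : ℕ), ∑ n ∈ Finset.Icc 1 N, w ^ n / (n:ℂ)
      = ∑ i ∈ Finset.range (N+1), w ^ i / (i:ℂ) := by
    intro w N
    rw [Finset.sum_range_succ']
    norm_num
    rw [← Finset.Ico_add_one_right_eq_Icc, Finset.sum_Ico_eq_sum_range]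
    exact Finset.sum_congr (by norm_num) fun i _ => by rw [add_comm]; push_cast; ring
  have hterm : ∀ a ∈ Ω, Tendsto (fun N : ℕ => ∑ n ∈ Finset.Icc 1 N, (z a) ^ n / (n:ℂ))
      atTop (𝓝 (-Complex.log (1 - z a))) := by
    intro a ha
    have h0 := tendsto_log_series (hzabs a ha) (hzne1 a ha)
    have h1 := h0.comp (tendsto_add_atTop_nat 1)
    apply h1.congr
    intro N
    exact (hIcc (z a) N).symm
  -- the complex partial sums
  set L : ℂ := ∑ a ∈ Ω, (-(c a)) * E a * (-Complex.log (1 - z a)) with hL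
  have hC : Tendsto (fun N : ℕ => ∑ a ∈ Ω, (-(c a)) * E a *
      (∑ n ∈ Finset.Icc 1 N, (z a) ^ n / (n:ℂ))) atTop (𝓝 L) := by
    rw [hL]
    apply tendsto_finset_sum
    intro a ha
    exact (hterm a ha).const_mul _
  -- identify with the real partial sums
  have heqS : ∀ N : ℕ, ((∑ n ∈ Finset.Icc 1 N, fPerInt k ((n:ℤ) + m) / (n:ℝ) : ℝ) : ℂ)
      = ∑ a ∈ Ω, (-(c a)) * E a * (∑ n ∈ Finset.Icc 1 N, (z a) ^ n / (n:ℂ)) := by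
    intro N
    push_cast
    have hstep : ∀ n ∈ Finset.Icc 1 N, ((fPerInt k ((n:ℤ) + m) : ℝ) : ℂ) / (n:ℂ)
        = ∑ a ∈ Ω, (-(c a)) * E a * ((z a) ^ n / (n:ℂ)) := by
      intro n _
      rw [fourier_odd k hk ((n:ℤ) + m), ← hΩ]
      rw [Finset.sum_div]
      apply Finset.sum_congr rfl
      intro a ha
      have hexp : Complex.exp (2 * (π:ℂ) * I * (a:ℂ) * (((n:ℤ) + m : ℤ):ℂ) / 2^k)
          = E a * (z a) ^ n := by
        rw [hEdef, hzdef]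
        simp only
        rw [← Complex.exp_nat_mul, ← Complex.exp_add]
        congr 1
        push_cast
        ring
      rw [hcdef, hexp]
      ring
    rw [Finset.sum_congr rfl hstep, Finset.sum_comm]
    apply Finset.sum_congr rfl
    intro a _
    rw [Finset.mul_sum]
  have hC' : Tendsto (fun N : ℕ =>
      ((∑ n ∈ Finset.Icc 1 N, fPerInt k ((n:ℤ) + m) / (n:ℝ) : ℝ) : ℂ)) atTop (𝓝 L) := by
    apply hC.congr
    intro N
    exact (heqS N).symm
  -- real and imaginary parts
  have hS : Tendsto (fun N : ℕ => ∑ n ∈ Finset.Icc 1 N, fPerInt k ((n:ℤ) + m) / (n:ℝ))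
      atTop (𝓝 L.re) := by
    have := (Complex.continuous_re.tendsto L).comp hC'
    simpa [Function.comp_def] using this
  have him : L.im = 0 := by
    have h1 := (Complex.continuous_im.tendsto L).comp hC'
    have h2 : Tendsto (fun _ : ℕ => (0:ℝ)) atTop (𝓝 L.im) := by
      apply h1.congr
      intro N
      simp [Function.comp_def]
    exact tendsto_nhds_unique h2 tendsto_const_nhds
  have hU : Uconst k m = L.re := by
    rw [Uconst]
    exact hS.limUnder_eq
  rw [hU]
  have hLre : ((L.re : ℝ) : ℂ) = L := Complex.ext (by simp) (by simp [him])
  rw [hLre, hL]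
  apply Finset.sum_congr rfl
  intro a _
  rw [hcdef, hEdef, hzdef]
  ring
end
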